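/- arXiv:2301.00778 — 3 statements merged into one kernel-verified Lean document; each statement's English description precedes it below -/
import Mathlib

section
/- Coercivity of the ordering ≺ (property (as09)): For every real number C, the set of multi-indices γ with |γ|_≺ ≤ C is finite. In particular, for every multi-index β, the set {γ : γ ≺ β} is finite. -/
open MvPowerSeries

noncomputable section

/-- Indices `n ∈ ℕ² \ {(0,0)}` for the variables `z_n`. -/
abbrev Pos2 : Type := {p : ℕ × ℕ // p ≠ (0, 0)}

/-- The variables: `z_k` for `k ∈ ℕ` (left) and `z_n` for `n ∈ ℕ²\{0}` (right). -/
abbrev Var : Type := ℕ ⊕ Pos2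

/-- Multi-indices: finitely supported functions from the variables to ℕ. -/
abbrev MIdx : Type := Var →₀ ℕ

/-- The algebra ℝ[[z_k, z_n]] of formal power series. -/
abbrev FPS : Type := MvPowerSeries Var ℝ

/-- The variable `z_k` as a power series. -/
def zk (k : ℕ) : FPS := MvPowerSeries.X (Sum.inl k)

/-- The variable `z_n` as a power series. -/
def zn (n : Pos2) : FPS := MvPowerSeries.X (Sum.inr n)

/-- The derivation `D⁽⁰⁾ = Σ_k (k+1) z_{k+1} ∂_{z_k}`, defined componentwise by
`(D⁽⁰⁾π)_β = Σ_{k, β(k+1) ≥ 1} (k+1)(β(k)+1) π_{β + e_k - e_{k+1}}`. -/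
def Dzero (π : FPS) : FPS := fun β =>
  ∑ j ∈ β.support,
    (match j with
     | Sum.inl (k + 1) =>
         ((k : ℝ) + 1) * ((β (Sum.inl k) : ℝ) + 1) *
           MvPowerSeries.coeff
             (β + Finsupp.single (Sum.inl k) 1 - Finsupp.single (Sum.inl (k + 1)) 1) π
     | _ => 0)

/-- `c ∈ ℝ[[z_k]]`: the subalgebra of series with no `z_n`-dependence. -/
def OnlyZk (c : FPS) : Prop :=
  ∀ β : MIdx, (∃ n : Pos2, β (Sum.inr n) ≠ 0) → MvPowerSeries.coeff β c = 0

/-- `[β] := Σ_k k β(k) − Σ_n β(n)`. -/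
def bracketZ (β : MIdx) : ℤ :=
  β.sum fun j m => (match j with | Sum.inl k => (k : ℤ) | Sum.inr _ => -1) * (m : ℤ)

/-- `|β|_p := Σ_n |n| β(n)` where `|n| = n₁ + 2 n₂`. -/
def homP (β : MIdx) : ℝ :=
  β.sum fun j m =>
    (match j with | Sum.inl _ => (0 : ℝ) | Sum.inr n => (n.val.1 : ℝ) + 2 * n.val.2) * (m : ℝ)

/-- The homogeneity `|β| := α (1 + [β]) + |β|_p`. -/
def hom (α : ℝ) (β : MIdx) : ℝ := α * (1 + (bracketZ β : ℝ)) + homP β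

/-- `|β|_≺ := |β| + λ β(0)`; the ordering is `γ ≺ β iff |γ|_≺ < |β|_≺`. -/
def ordP (α lam : ℝ) (β : MIdx) : ℝ := hom α β + lam * (β (Sum.inl 0) : ℝ)

def wgt (α lam : ℝ) : Var → ℝ := fun j =>
  match j with
  | Sum.inl 0 => lam
  | Sum.inl (k+1) => α * (k+1)
  | Sum.inr n => ((n.val.1 : ℝ) + 2 * n.val.2) - α

lemma ordP_eq (α lam : ℝ) (γ : MIdx) :
    ordP α lam γ = α + ∑ j ∈ γ.support, wgt α lam j * (γ j : ℝ) := by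
  classical
  rw [ordP, hom, bracketZ, homP, Finsupp.sum, Finsupp.sum]
  rw [Int.cast_sum, mul_add, mul_one, Finset.mul_sum]
  have h0 : lam * ((γ (Sum.inl 0) : ℕ) : ℝ)
      = ∑ j ∈ γ.support, (if j = Sum.inl 0 then lam * ((γ j : ℕ) : ℝ) else 0) := by
    rw [Finset.sum_ite_eq' γ.support (Sum.inl 0) (fun j => lam * ((γ j : ℕ) : ℝ))]
    by_cases h : Sum.inl 0 ∈ γ.support
    · simp [h]
    · simp [h, Finsupp.notMem_support_iff.mp h]
  rw [h0, add_assoc, add_assoc, ← Finset.sum_add_distrib, ← Finset.sum_add_distrib]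
  congr 1
  apply Finset.sum_congr rfl
  intro j _
  match j with
  | Sum.inl 0 => simp [wgt]
  | Sum.inl (k+1) => simp [wgt]; ring
  | Sum.inr n => simp [wgt]; ring


lemma wgt_pos {α lam : ℝ} (hα0 : 0 < α) (hα1 : α < 1) (hlam0 : 0 < lam) (j : Var) :
    0 < wgt α lam j := by
  match j with
  | Sum.inl 0 => exact hlam0
  | Sum.inl (k+1) => simp only [wgt]; positivity
  | Sum.inr n =>
    have hn : 1 ≤ n.val.1 + 2 * n.val.2 := by
      rcases n with ⟨⟨a, b⟩, hab⟩
      show 1 ≤ a + 2 * b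
      simp only [ne_eq, Prod.mk.injEq, not_and] at hab
      omega
    have h : (1 : ℝ) ≤ (n.val.1 : ℝ) + 2 * n.val.2 := by exact_mod_cast hn
    simp only [wgt]; linarith


/-- Coercivity of the ordering `≺` (property (as09)): for every `C ∈ ℝ` the set of
multi-indices `γ` with `|γ|_≺ ≤ C` is finite; in particular `{γ : γ ≺ β}` is finite. -/
theorem stmt_12 (α lam : ℝ) (hα0 : 0 < α) (hα1 : α < 1) (hlam0 : 0 < lam) (hlam : lam < α) :
    (∀ C : ℝ, {γ : MIdx | ordP α lam γ ≤ C}.Finite) ∧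
    ∀ β : MIdx, {γ : MIdx | ordP α lam γ < ordP α lam β}.Finite := by
  classical
  have main : ∀ C : ℝ, {γ : MIdx | ordP α lam γ ≤ C}.Finite := by
    intro C
    set wmin : ℝ := min lam (1 - α) with hwmin
    have hwmin0 : 0 < wmin := lt_min hlam0 (by linarith)
    have hwa : wmin ≤ α := le_trans (min_le_left _ _) hlam.le
    have hw1 : wmin ≤ 1 := le_trans (min_le_right _ _) (by linarith)
    have hwmin_le : ∀ j : Var, wmin ≤ wgt α lam j := by
      intro j
      match j with
      | Sum.inl 0 => exact min_le_left _ _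
      | Sum.inl (k+1) =>
        have h1 : (0:ℝ) ≤ (k:ℝ) := Nat.cast_nonneg k
        have h2 := min_le_left lam (1 - α)
        simp only [wgt]; nlinarith
      | Sum.inr n =>
        have hn : 1 ≤ n.val.1 + 2 * n.val.2 := by
          rcases n with ⟨⟨a, b⟩, hab⟩
          show 1 ≤ a + 2 * b
          simp only [ne_eq, Prod.mk.injEq, not_and] at hab
          omega
        have h : (1 : ℝ) ≤ (n.val.1 : ℝ) + 2 * n.val.2 := by exact_mod_cast hn
        have h2 := min_le_right lam (1 - α)
        simp only [wgt]; linarith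
    set D : ℝ := max (C - α) 0 with hD
    have hD0 : 0 ≤ D := le_max_right _ _
    set N : ℕ := ⌈(D + 1) / wmin⌉₊ with hN
    have hNR : (D + 1) / wmin ≤ (N : ℝ) := Nat.le_ceil _
    have key : ∀ x : ℝ, x * wmin ≤ D + 1 → x ≤ (N : ℝ) := by
      intro x hxw
      have : x ≤ (D + 1) / wmin := (le_div_iff₀ hwmin0).mpr (by linarith)
      linarith
    set T : Finset Var :=
      (Finset.range (N+1)).disjSum
        ((Finset.range (N+1) ×ˢ Finset.range (N+1)).subtype
          (fun p => p ≠ ((0:ℕ),(0:ℕ)))) with hT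
    set g : MIdx := Finsupp.indicator T (fun _ _ => N) with hg
    apply Set.Finite.subset (Set.finite_Iic g)
    intro γ hγ
    simp only [Set.mem_setOf_eq] at hγ
    have hsum : ∑ j ∈ γ.support, wgt α lam j * (γ j : ℝ) ≤ D := by
      have heq := ordP_eq α lam γ
      have : ∑ j ∈ γ.support, wgt α lam j * (γ j : ℝ) ≤ C - α := by linarith
      exact le_trans this (le_max_left _ _)
    have hterm : ∀ j ∈ γ.support, wgt α lam j * (γ j : ℝ) ≤ D := by
      intro j hj
      refine le_trans (Finset.single_le_sum (f := fun j => wgt α lam j * (γ j : ℝ)) ?_ hj) hsum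
      intro i _
      have := wgt_pos hα0 hα1 hlam0 i
      positivity
    have hone : ∀ j ∈ γ.support, (1 : ℝ) ≤ (γ j : ℝ) := by
      intro j hj
      exact_mod_cast Nat.one_le_iff_ne_zero.mpr (Finsupp.mem_support_iff.mp hj)
    have hwD : ∀ j ∈ γ.support, wgt α lam j ≤ D := by
      intro j hj
      have := hterm j hj
      have h1 := hone j hj
      have hw := wgt_pos hα0 hα1 hlam0 j
      nlinarith
    have hγN : ∀ j ∈ γ.support, (γ j : ℝ) ≤ (N : ℝ) := by
      intro j hj
      refine key _ ?_
      have hw := hwmin_le j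
      have h0 : (0:ℝ) ≤ (γ j : ℝ) := by positivity
      have := hterm j hj
      nlinarith
    rw [Set.mem_Iic]
    intro j
    by_cases hj : j ∈ γ.support
    · have hjT : j ∈ T := by
        match j with
        | Sum.inl 0 =>
          rw [hT, Finset.inl_mem_disjSum, Finset.mem_range]; omega
        | Sum.inl (k+1) =>
          rw [hT, Finset.inl_mem_disjSum, Finset.mem_range]
          have h2 := hwD _ hj
          simp only [wgt] at h2
          have hk : ((k:ℝ)+1) ≤ (N:ℝ) := by
            refine key _ ?_
            have h0 : (0:ℝ) ≤ (k:ℝ)+1 := by positivity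
            nlinarith
          have : (k+1 : ℕ) ≤ N := by exact_mod_cast hk
          omega
        | Sum.inr n =>
          rw [hT, Finset.inr_mem_disjSum, Finset.mem_subtype, Finset.mem_product,
            Finset.mem_range, Finset.mem_range]
          have h2 := hwD _ hj
          simp only [wgt] at h2
          have hx : (n.val.1 : ℝ) + 2 * n.val.2 ≤ D + 1 := by linarith
          have h1 : (n.val.1 : ℝ) ≤ (N:ℝ) := by
            refine key _ ?_
            have h0a : (0:ℝ) ≤ (n.val.1 : ℝ) := by positivity
            have h0b : (0:ℝ) ≤ (n.val.2 : ℝ) := by positivity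
            nlinarith
          have h2' : (n.val.2 : ℝ) ≤ (N:ℝ) := by
            refine key _ ?_
            have h0a : (0:ℝ) ≤ (n.val.1 : ℝ) := by positivity
            have h0b : (0:ℝ) ≤ (n.val.2 : ℝ) := by positivity
            nlinarith
          have hn1 : n.val.1 ≤ N := by exact_mod_cast h1
          have hn2 : n.val.2 ≤ N := by exact_mod_cast h2'
          exact ⟨by omega, by omega⟩
      have hgj : g j = N := by rw [hg, Finsupp.indicator_of_mem hjT]
      rw [hgj]
      exact_mod_cast hγN j hj
    · have : γ j = 0 := Finsupp.notMem_support_iff.mp hj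
      simp [this]
  refine ⟨main, fun β => (main (ordP α lam β)).subset ?_⟩
  intro γ hγ
  simp only [Set.mem_setOf_eq] at hγ ⊢
  exact le_of_lt hγ
end
end

section
/- Existence, uniqueness and triangularity of the re-expansion map (Lemma 7.1): Let {π⁽ⁿ⁾}_{n ∈ ℕ²} ⊂ ℝ[[z_k,z_n]] (the index n ranging over all of ℕ², including n = (0,0)) satisfy the population condition π⁽ⁿ⁾_β = 0 unless |n| < |β|. Then there exists a unique matrix of real numbers ((Γ*)_β^γ), indexed by pairs of multi-indices, such that: (i) for each β, the set {γ : (Γ*)_β^γ ≠ 0} is finite; (ii) the induced linear map (Γ*π)_β := Σ_γ (Γ*)_β^γ π_γ is a unital algebra endomorphism of ℝ[[z_k,z_n]]; (iii) Γ* z_k = Σ_{l≥0} (k+l choose k) (π⁽⁰⁾)^l z_{k+l} for all k ∈ ℕ; and (iv) Γ* z_n = z_n + π⁽ⁿ⁾ for all n ≠ (0,0). Moreover this matrix is strictly triangular: (Γ*)_β^γ = δ_β^γ unless both |γ| < |β| and γ ≺ β. -/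
open MvPowerSeries

noncomputable section

/-- Row-finiteness of a matrix indexed by pairs of multi-indices. -/
def RowFinite (Γ : MIdx → MIdx → ℝ) : Prop := ∀ β : MIdx, {γ : MIdx | Γ β γ ≠ 0}.Finite

/-- The linear map induced componentwise by a (row-finite) matrix. -/
def applyG (Γ : MIdx → MIdx → ℝ) (π : FPS) : FPS := fun β =>
  ∑ᶠ γ : MIdx, Γ β γ * MvPowerSeries.coeff γ π

/-- The prescribed image of `z_k`: `Σ_{l≥0} (k+l choose k) q^l z_{k+l}`, defined
componentwise (only finitely many `l` contribute to each component). -/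
def gammaZk (q : FPS) (k : ℕ) : FPS := fun β =>
  ∑ᶠ l : ℕ, (((k + l).choose k : ℝ)) * MvPowerSeries.coeff β (q ^ l * zk (k + l))

/-- The population condition `π⁽ⁿ⁾_β = 0 unless |n| < |β|`. -/
def PopCond (α : ℝ) (pin : ℕ × ℕ → FPS) : Prop :=
  ∀ (n : ℕ × ℕ) (β : MIdx),
    MvPowerSeries.coeff β (pin n) ≠ 0 → ((n.1 : ℝ) + 2 * n.2) < hom α β

/-- `Γ` is the re-expansion matrix associated to the family `{π⁽ⁿ⁾}_{n ∈ ℕ²}`: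
row-finite, the induced map is a unital algebra endomorphism, and it maps the
coordinates `z_k`, `z_n` as prescribed. -/
def IsReExpansion (pin : ℕ × ℕ → FPS) (Γ : MIdx → MIdx → ℝ) : Prop :=
  RowFinite Γ ∧
  (∀ π π' : FPS, applyG Γ (π * π') = applyG Γ π * applyG Γ π') ∧
  applyG Γ 1 = 1 ∧
  (∀ k : ℕ, applyG Γ (zk k) = gammaZk (pin (0, 0)) k) ∧
  (∀ n : Pos2, applyG Γ (zn n) = zn n + pin n.val)

namespace Stmt13

/-- weight `wA` giving `hom α β = α + Wt (wA α) β`. -/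
def wA (α : ℝ) : Var → ℝ
  | Sum.inl k => α * k
  | Sum.inr n => (n.val.1 : ℝ) + 2 * n.val.2 - α

/-- weight `wB` giving `ordP α lam β = α + Wt (wB α lam) β`. -/
def wB (α lam : ℝ) : Var → ℝ := fun i => wA α i + (if i = Sum.inl 0 then lam else 0)

/-- total weight of a multi-index -/
def Wt (w : Var → ℝ) (β : MIdx) : ℝ := β.sum fun i m => w i * m

lemma Wt_zero (w : Var → ℝ) : Wt w 0 = 0 := Finsupp.sum_zero_index

lemma Wt_single (w : Var → ℝ) (i : Var) (m : ℕ) :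
    Wt w (Finsupp.single i m) = w i * m := Finsupp.sum_single_index (by simp)

lemma Wt_add (w : Var → ℝ) (a b : MIdx) : Wt w (a + b) = Wt w a + Wt w b :=
  Finsupp.sum_add_index' (by simp) (by intro i m n; push_cast; ring)

/-- `Wt w` as an additive monoid hom. -/
def WtH (w : Var → ℝ) : MIdx →+ ℝ :=
  { toFun := Wt w, map_zero' := Wt_zero w, map_add' := Wt_add w }

lemma Wt_finsetSum {ι : Type*} (w : Var → ℝ) (s : Finset ι) (f : ι → MIdx) :
    Wt w (∑ x ∈ s, f x) = ∑ x ∈ s, Wt w (f x) := map_sum (WtH w) f s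

lemma Wt_nonneg {w : Var → ℝ} (hw : ∀ i, 0 ≤ w i) (β : MIdx) : 0 ≤ Wt w β :=
  Finset.sum_nonneg fun i _ => mul_nonneg (hw i) (Nat.cast_nonneg _)

lemma pos2_ge_one (n : Pos2) : (1 : ℝ) ≤ (n.val.1 : ℝ) + 2 * n.val.2 := by
  rcases n with ⟨⟨a, b⟩, hn⟩
  have h : ¬(a = 0 ∧ b = 0) := by simpa [Prod.ext_iff] using hn
  have : 1 ≤ a + 2 * b := by omega
  calc (1:ℝ) ≤ ((a + 2*b : ℕ) : ℝ) := by exact_mod_cast this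
    _ = (a:ℝ) + 2*b := by push_cast; ring

lemma wA_nonneg {α : ℝ} (hα0 : 0 < α) (hα1 : α < 1) (i : Var) : 0 ≤ wA α i := by
  cases i with
  | inl k => exact mul_nonneg hα0.le (Nat.cast_nonneg _)
  | inr n => have := pos2_ge_one n; simp only [wA]; linarith

lemma wB_ge {α lam : ℝ} (hα0 : 0 < α) (hα1 : α < 1) (hlam0 : 0 < lam) (i : Var) :
    min lam (min α (1 - α)) ≤ wB α lam i := by
  cases i with
  | inl k =>
    rcases Nat.eq_zero_or_pos k with rfl | hk
    · have : wB α lam (Sum.inl 0) = lam := by simp [wB, wA]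
      rw [this]
      exact min_le_left _ _
    · have : (1:ℝ) ≤ k := by exact_mod_cast hk
      have h2 : α ≤ α * k := by nlinarith
      have : Sum.inl k ≠ (Sum.inl 0 : Var) := by
        simp only [ne_eq, Sum.inl.injEq]; omega
      simp only [wB, wA, if_neg this, add_zero]
      calc min lam (min α (1-α)) ≤ min α (1-α) := min_le_right _ _
        _ ≤ α := min_le_left _ _
        _ ≤ α * k := h2
  | inr n =>
    have := pos2_ge_one n
    simp only [wB, wA, reduceCtorEq, if_false, add_zero]
    calc min lam (min α (1-α)) ≤ min α (1-α) := min_le_right _ _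
      _ ≤ 1 - α := min_le_right _ _
      _ ≤ (n.val.1 : ℝ) + 2 * n.val.2 - α := by linarith

lemma wB_pos {α lam : ℝ} (hα0 : 0 < α) (hα1 : α < 1) (hlam0 : 0 < lam) (i : Var) :
    0 < wB α lam i :=
  lt_of_lt_of_le (lt_min hlam0 (lt_min hα0 (by linarith))) (wB_ge hα0 hα1 hlam0 i)

lemma Wt_wB_nonneg {α lam : ℝ} (hα0 : 0 < α) (hα1 : α < 1) (hlam0 : 0 < lam) (β : MIdx) :
    0 ≤ Wt (wB α lam) β := Wt_nonneg (fun i => (wB_pos hα0 hα1 hlam0 i).le) β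

lemma hom_eq (α : ℝ) (β : MIdx) : hom α β = α + Wt (wA α) β := by
  unfold hom bracketZ homP Wt Finsupp.sum
  push_cast
  rw [mul_add, mul_one, Finset.mul_sum, add_assoc, ← Finset.sum_add_distrib]
  congr 1
  refine Finset.sum_congr rfl fun i _ => ?_
  cases i with
  | inl k => simp [wA]; ring
  | inr n => simp [wA]; ring

lemma Wt_wB_eq (α lam : ℝ) (β : MIdx) :
    Wt (wB α lam) β = Wt (wA α) β + lam * (β (Sum.inl 0) : ℝ) := by
  unfold Wt wB Finsupp.sum
  simp only [add_mul, ite_mul, zero_mul, Finset.sum_add_distrib]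
  congr 1
  rw [Finset.sum_ite_eq' β.support (Sum.inl 0) (fun i => lam * (β i : ℝ))]
  split_ifs with h
  · rfl
  · simp [Finsupp.notMem_support_iff.mp h]

lemma ordP_eq (α lam : ℝ) (β : MIdx) : ordP α lam β = α + Wt (wB α lam) β := by
  rw [ordP, hom_eq, Wt_wB_eq]; ring

end Stmt13
namespace Stmt13

variable (pin : ℕ × ℕ → FPS)

/-- images of the generators -/
def gg : Var → FPS
  | Sum.inl k => gammaZk (pin (0, 0)) k
  | Sum.inr n => zn n + pin n.val

/-- image of the monomial `z^γ` -/
def PP (γ : MIdx) : FPS := γ.prod fun i m => gg pin i ^ m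

/-- the re-expansion matrix -/
def Gm : MIdx → MIdx → ℝ := fun β γ => MvPowerSeries.coeff β (PP pin γ)

lemma PP_zero : PP pin 0 = 1 := Finsupp.prod_zero_index

lemma PP_add (a b : MIdx) : PP pin (a + b) = PP pin a * PP pin b :=
  Finsupp.prod_add_index' (fun i => pow_zero _) (fun i m n => pow_add _ _ _)

lemma PP_single (i : Var) : PP pin (Finsupp.single i 1) = gg pin i := by
  rw [PP]
  have h : (Finsupp.single i 1).prod (fun j m => gg pin j ^ m) = gg pin i ^ 1 :=
    Finsupp.prod_single_index (pow_zero _)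
  rw [h, pow_one]

/-- The factor multiset of a multi-index, as a finset of a sigma type. -/
def Fac (γ : MIdx) : Finset ((_ : Var) × ℕ) := γ.support.sigma fun i => Finset.range (γ i)

lemma prod_Fac {M : Type*} [CommMonoid M] (g : Var → M) (γ : MIdx) :
    ∏ x ∈ Fac γ, g x.1 = γ.prod fun i m => g i ^ m := by
  rw [Fac, Finset.prod_sigma]
  refine Finset.prod_congr rfl fun i _ => ?_
  show ∏ _s ∈ Finset.range (γ i), g i = g i ^ γ i
  rw [Finset.prod_const, Finset.card_range]

lemma PP_eq (γ : MIdx) : PP pin γ = ∏ x ∈ Fac γ, gg pin x.1 := (prod_Fac _ γ).symm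

lemma sum_single_Fac (γ : MIdx) : ∑ x ∈ Fac γ, Finsupp.single x.1 1 = γ := by
  rw [Fac, Finset.sum_sigma]
  calc ∑ i ∈ γ.support, ∑ _j ∈ Finset.range (γ i), Finsupp.single i 1
      = ∑ i ∈ γ.support, Finsupp.single i (γ i) := by
        refine Finset.sum_congr rfl fun i _ => ?_
        rw [Finset.sum_const, Finset.card_range, Finsupp.smul_single, smul_eq_mul, mul_one]
    _ = γ := Finsupp.sum_single γ

end Stmt13
namespace Stmt13

open MvPowerSeries

lemma coeff_mul_X' (f : FPS) (j : Var) (β : MIdx) :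
    MvPowerSeries.coeff β (f * MvPowerSeries.X j) =
      if Finsupp.single j 1 ≤ β then
        MvPowerSeries.coeff (β - Finsupp.single j 1) f else 0 := by
  classical
  rw [X_def, coeff_mul_monomial]
  split_ifs <;> simp

variable {α lam : ℝ} {pin : ℕ × ℕ → FPS}

lemma gammaZk_term (hα0 : 0 < α) (hα1 : α < 1) (hlam0 : 0 < lam) (hlam : lam < α)
    (k l : ℕ) (β : MIdx)
    (h : MvPowerSeries.coeff β ((pin (0, 0)) ^ l * zk (k + l)) ≠ 0) :
    (l = 0 ∧ β = Finsupp.single (Sum.inl k) 1) ∨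
      (Wt (wA α) (Finsupp.single (Sum.inl k) 1) < Wt (wA α) β ∧
        Wt (wB α lam) (Finsupp.single (Sum.inl k) 1) < Wt (wB α lam) β) := by
  classical
  rw [zk, coeff_mul_X'] at h
  by_cases hle : Finsupp.single (Sum.inl (k + l) : Var) 1 ≤ β
  swap
  · rw [if_neg hle] at h; exact (h rfl).elim
  rw [if_pos hle] at h
  have hβ : β = (β - Finsupp.single (Sum.inl (k + l)) 1) + Finsupp.single (Sum.inl (k + l)) 1 :=
    (tsub_add_cancel_of_le hle).symm
  set δ := β - Finsupp.single (Sum.inl (k + l) : Var) 1 with hδ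
  rcases Nat.eq_zero_or_pos l with rfl | hl
  · left
    refine ⟨rfl, ?_⟩
    rw [pow_zero, MvPowerSeries.coeff_one] at h
    have hδ0 : δ = 0 := by by_contra h0; rw [if_neg h0] at h; exact h rfl
    rw [hβ, hδ0, zero_add, Nat.add_zero]
  · right
    have hl1 : (1 : ℝ) ≤ (l : ℝ) := by exact_mod_cast hl
    have hA : Wt (wA α) β = Wt (wA α) δ + α * ((k : ℝ) + l) := by
      rw [hβ, Wt_add, Wt_single]
      simp only [wA]
      push_cast; ring
    have hB : Wt (wB α lam) β = Wt (wB α lam) δ + α * ((k : ℝ) + l) := by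
      rw [hβ, Wt_add, Wt_single]
      have hne : (Sum.inl (k + l) : Var) ≠ Sum.inl 0 := by
        simp only [ne_eq, Sum.inl.injEq]; omega
      simp only [wB, wA, if_neg hne]
      push_cast; ring
    have hAδ : 0 ≤ Wt (wA α) δ := Wt_nonneg (wA_nonneg hα0 hα1) δ
    have hBδ : 0 ≤ Wt (wB α lam) δ := Wt_wB_nonneg hα0 hα1 hlam0 δ
    constructor
    · rw [hA, Wt_single]
      simp only [wA]
      push_cast
      nlinarith
    · rw [hB, Wt_single]
      rcases Nat.eq_zero_or_pos k with rfl | hk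
      · simp only [wB, wA, if_pos rfl]
        push_cast
        nlinarith
      · have hne : (Sum.inl k : Var) ≠ Sum.inl 0 := by
          simp only [ne_eq, Sum.inl.injEq]; omega
        simp only [wB, wA, if_neg hne]
        push_cast
        nlinarith
lemma coeff_gg (hα0 : 0 < α) (hα1 : α < 1) (hlam0 : 0 < lam) (hlam : lam < α)
    (hpop : PopCond α pin) (i : Var) (β : MIdx)
    (h : MvPowerSeries.coeff β (gg pin i) ≠ 0) :
    β = Finsupp.single i 1 ∨
      (Wt (wA α) (Finsupp.single i 1) < Wt (wA α) β ∧
        Wt (wB α lam) (Finsupp.single i 1) < Wt (wB α lam) β) := by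
  classical
  cases i with
  | inl k =>
    have h' : gammaZk (pin (0, 0)) k β ≠ 0 := h
    have hex : ∃ l : ℕ,
        (((k + l).choose k : ℝ)) * MvPowerSeries.coeff β ((pin (0, 0)) ^ l * zk (k + l)) ≠ 0 := by
      by_contra hc
      push_neg at hc
      exact h' (finsum_eq_zero_of_forall_eq_zero hc)
    obtain ⟨l, hl⟩ := hex
    have hl' : MvPowerSeries.coeff β ((pin (0, 0)) ^ l * zk (k + l)) ≠ 0 :=
      right_ne_zero_of_mul hl
    rcases gammaZk_term hα0 hα1 hlam0 hlam k l β hl' with ⟨-, hβ⟩ | hstr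
    · exact Or.inl hβ
    · exact Or.inr hstr
  | inr n =>
    by_cases hβ : β = Finsupp.single (Sum.inr n : Var) 1
    · exact Or.inl hβ
    right
    have hX : MvPowerSeries.coeff β (zn n) = 0 := by
      rw [zn, MvPowerSeries.coeff_X, if_neg hβ]
    have hpn : MvPowerSeries.coeff β (pin n.val) ≠ 0 := by
      intro h0
      apply h
      rw [gg, map_add, hX, h0, add_zero]
    have hh := hpop n.val β hpn
    rw [hom_eq] at hh
    have hWA : Wt (wA α) (Finsupp.single (Sum.inr n : Var) 1) = (n.val.1 : ℝ) + 2 * n.val.2 - α := by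
      rw [Wt_single]; simp [wA]
    have hWB : Wt (wB α lam) (Finsupp.single (Sum.inr n : Var) 1) =
        (n.val.1 : ℝ) + 2 * n.val.2 - α := by
      rw [Wt_single]; simp [wB, wA]
    have hge : Wt (wA α) β ≤ Wt (wB α lam) β := by
      rw [Wt_wB_eq]
      have : 0 ≤ lam * (β (Sum.inl 0) : ℝ) := by positivity
      linarith
    constructor
    · rw [hWA]; linarith
    · rw [hWB]; linarith

lemma coeff_gg_diag (hα0 : 0 < α) (hα1 : α < 1) (hpop : PopCond α pin) (i : Var) :
    MvPowerSeries.coeff (Finsupp.single i 1) (gg pin i) = 1 := by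
  classical
  cases i with
  | inl k =>
    have h0 : ∀ l : ℕ, l ≠ 0 →
        (((k + l).choose k : ℝ)) *
          MvPowerSeries.coeff (Finsupp.single (Sum.inl k : Var) 1)
            ((pin (0, 0)) ^ l * zk (k + l)) = 0 := by
      intro l hl
      have hne : ¬ Finsupp.single (Sum.inl (k + l) : Var) 1 ≤
          Finsupp.single (Sum.inl k : Var) 1 := by
        rw [Finsupp.single_le_iff]
        have : (Sum.inl (k + l) : Var) ≠ Sum.inl k := by
          simp only [ne_eq, Sum.inl.injEq]; omega
        rw [Finsupp.single_apply, if_neg (by simpa [eq_comm] using this)]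
        omega
      rw [zk, coeff_mul_X', if_neg hne, mul_zero]
    have : gammaZk (pin (0, 0)) k (Finsupp.single (Sum.inl k : Var) 1) =
        (((k + 0).choose k : ℝ)) *
          MvPowerSeries.coeff (Finsupp.single (Sum.inl k : Var) 1)
            ((pin (0, 0)) ^ 0 * zk (k + 0)) :=
      finsum_eq_single _ 0 fun l hl => h0 l hl
    show gammaZk (pin (0, 0)) k (Finsupp.single (Sum.inl k : Var) 1) = 1
    rw [this, pow_zero, one_mul, Nat.add_zero, Nat.choose_self, zk, MvPowerSeries.coeff_X,
      if_pos rfl]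
    norm_num
  | inr n =>
    have hpn : MvPowerSeries.coeff (Finsupp.single (Sum.inr n : Var) 1) (pin n.val) = 0 := by
      by_contra h0
      have hh := hpop n.val _ h0
      rw [hom_eq, Wt_single] at hh
      simp only [wA] at hh
      push_cast at hh
      linarith
    rw [gg, map_add, hpn, add_zero, zn, MvPowerSeries.coeff_X, if_pos rfl]
lemma key (hα0 : 0 < α) (hα1 : α < 1) (hlam0 : 0 < lam) (hlam : lam < α)
    (hpop : PopCond α pin) (s : Finset ((_ : Var) × ℕ)) (l : ((_ : Var) × ℕ) →₀ MIdx)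
    (β : MIdx) (hsum : ∑ x ∈ s, l x = β)
    (hne : ∀ x ∈ s, MvPowerSeries.coeff (l x) (gg pin x.1) ≠ 0) :
    (∀ x ∈ s, l x = Finsupp.single x.1 1) ∨
      (Wt (wA α) (∑ x ∈ s, (Finsupp.single x.1 1 : MIdx)) < Wt (wA α) β ∧
        Wt (wB α lam) (∑ x ∈ s, (Finsupp.single x.1 1 : MIdx)) < Wt (wB α lam) β) := by
  by_cases hall : ∀ x ∈ s, l x = Finsupp.single x.1 1
  · exact Or.inl hall
  right
  push_neg at hall
  obtain ⟨x₀, hx₀, hx₀ne⟩ := hall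
  have hdich : ∀ x ∈ s,
      (Wt (wA α) (Finsupp.single x.1 1) ≤ Wt (wA α) (l x) ∧
        Wt (wB α lam) (Finsupp.single x.1 1) ≤ Wt (wB α lam) (l x)) := by
    intro x hx
    rcases coeff_gg hα0 hα1 hlam0 hlam hpop x.1 (l x) (hne x hx) with heq | hstr
    · rw [heq]; exact ⟨le_refl _, le_refl _⟩
    · exact ⟨hstr.1.le, hstr.2.le⟩
  have hstr0 : Wt (wA α) (Finsupp.single x₀.1 1) < Wt (wA α) (l x₀) ∧
      Wt (wB α lam) (Finsupp.single x₀.1 1) < Wt (wB α lam) (l x₀) := by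
    rcases coeff_gg hα0 hα1 hlam0 hlam hpop x₀.1 (l x₀) (hne x₀ hx₀) with heq | hstr
    · exact absurd heq hx₀ne
    · exact hstr
  rw [← hsum, Wt_finsetSum, Wt_finsetSum, Wt_finsetSum, Wt_finsetSum]
  exact ⟨Finset.sum_lt_sum (fun x hx => (hdich x hx).1) ⟨x₀, hx₀, hstr0.1⟩,
    Finset.sum_lt_sum (fun x hx => (hdich x hx).2) ⟨x₀, hx₀, hstr0.2⟩⟩

lemma Gm_strict (hα0 : 0 < α) (hα1 : α < 1) (hlam0 : 0 < lam) (hlam : lam < α)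
    (hpop : PopCond α pin) (β γ : MIdx) (h : Gm pin β γ ≠ 0) (hne : γ ≠ β) :
    Wt (wA α) γ < Wt (wA α) β ∧ Wt (wB α lam) γ < Wt (wB α lam) β := by
  classical
  rw [Gm, PP_eq, MvPowerSeries.coeff_prod] at h
  obtain ⟨l, hl, hprod⟩ := Finset.exists_ne_zero_of_sum_ne_zero h
  rw [Finset.mem_finsuppAntidiag] at hl
  have hfac : ∀ x ∈ Fac γ, MvPowerSeries.coeff (l x) (gg pin x.1) ≠ 0 :=
    fun x hx => Finset.prod_ne_zero_iff.mp hprod x hx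
  rcases key hα0 hα1 hlam0 hlam hpop (Fac γ) l β hl.1 hfac with hall | hstr
  · exact absurd ((sum_single_Fac γ).symm.trans ((Finset.sum_congr rfl hall).symm.trans hl.1))
      hne
  · rw [sum_single_Fac] at hstr
    exact hstr

lemma Gm_diag (hα0 : 0 < α) (hα1 : α < 1) (hlam0 : 0 < lam) (hlam : lam < α)
    (hpop : PopCond α pin) (β : MIdx) : Gm pin β β = 1 := by
  classical
  rw [Gm, PP_eq, MvPowerSeries.coeff_prod]
  set l₀ : ((_ : Var) × ℕ) →₀ MIdx :=
    ∑ x ∈ Fac β, Finsupp.single x (Finsupp.single x.1 1) with hl₀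
  have hl₀app : ∀ x, l₀ x = if x ∈ Fac β then Finsupp.single x.1 1 else 0 := by
    intro x
    rw [hl₀, Finsupp.finset_sum_apply]
    simp only [Finsupp.single_apply]
    exact Finset.sum_ite_eq' (Fac β) x _
  have hsum0 : ∑ x ∈ Fac β, l₀ x = β := by
    rw [Finset.sum_congr rfl fun x hx => (hl₀app x).trans (if_pos hx)]
    exact sum_single_Fac β
  have hmem : l₀ ∈ Finset.finsuppAntidiag (Fac β) β := by
    rw [Finset.mem_finsuppAntidiag]
    refine ⟨hsum0, fun y hy => ?_⟩
    by_contra hyn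
    exact Finsupp.mem_support_iff.mp hy ((hl₀app y).trans (if_neg hyn))
  rw [Finset.sum_eq_single_of_mem l₀ hmem ?_]
  · refine Finset.prod_eq_one fun x hx => ?_
    rw [hl₀app x, if_pos hx]
    exact coeff_gg_diag hα0 hα1 hpop x.1
  · intro b hb hbne
    rw [Finset.mem_finsuppAntidiag] at hb
    by_contra hp
    have hfac : ∀ x ∈ Fac β, MvPowerSeries.coeff (b x) (gg pin x.1) ≠ 0 :=
      fun x hx => Finset.prod_ne_zero_iff.mp hp x hx
    rcases key hα0 hα1 hlam0 hlam hpop (Fac β) b β hb.1 hfac with hall | hstr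
    · apply hbne
      refine Finsupp.ext fun y => ?_
      by_cases hy : y ∈ Fac β
      · rw [hall y hy, hl₀app y, if_pos hy]
      · rw [hl₀app y, if_neg hy]
        by_contra hby
        exact hy (hb.2 (Finsupp.mem_support_iff.mpr hby))
    · rw [sum_single_Fac] at hstr
      exact lt_irrefl _ hstr.1
lemma wB_var_finite (hα0 : 0 < α) (hα1 : α < 1) (hlam0 : 0 < lam) (C : ℝ) :
    {i : Var | wB α lam i ≤ C}.Finite := by
  classical
  set M₁ : ℕ := Nat.ceil (C / α) with hM₁
  set M₂ : ℕ := Nat.ceil (C + α) with hM₂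
  have hsub : {i : Var | wB α lam i ≤ C} ⊆
      (Sum.inl '' Set.Iic M₁) ∪
        (Sum.inr '' {n : Pos2 | n.val.1 ≤ M₂ ∧ n.val.2 ≤ M₂}) := by
    rintro (k | n) hi
    · left
      refine ⟨k, ?_, rfl⟩
      simp only [Set.mem_Iic]
      have hite : (0:ℝ) ≤ (if (Sum.inl k : Var) = Sum.inl 0 then lam else 0) := by
        split_ifs <;> [exact hlam0.le; exact le_refl 0]
      have h1 : α * k ≤ C := by
        have := hi
        simp only [Set.mem_setOf_eq, wB, wA] at this
        linarith
      have h2 : (k : ℝ) ≤ C / α := (le_div_iff₀ hα0).mpr (by linarith)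
      have h3 : (k : ℝ) ≤ (M₁ : ℝ) := h2.trans (Nat.le_ceil _)
      exact_mod_cast h3
    · right
      refine ⟨n, ?_, rfl⟩
      have hw : (n.val.1 : ℝ) + 2 * n.val.2 - α ≤ C := by
        have := hi
        simp only [Set.mem_setOf_eq, wB, wA, reduceCtorEq, if_false, add_zero] at this
        exact this
      have h1 : (n.val.1 : ℝ) ≤ C + α := by
        have : (0:ℝ) ≤ (n.val.2 : ℝ) := Nat.cast_nonneg _
        linarith
      have h2 : (n.val.2 : ℝ) ≤ C + α := by
        have h0 : (0:ℝ) ≤ (n.val.1 : ℝ) := Nat.cast_nonneg _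
        have h0' : (0:ℝ) ≤ (n.val.2 : ℝ) := Nat.cast_nonneg _
        linarith
      constructor
      · exact_mod_cast h1.trans (Nat.le_ceil _)
      · exact_mod_cast h2.trans (Nat.le_ceil _)
  refine Set.Finite.subset (Set.Finite.union ((Set.finite_Iic M₁).image _) ?_) hsub
  refine Set.Finite.image _ ?_
  have : {n : Pos2 | n.val.1 ≤ M₂ ∧ n.val.2 ≤ M₂} ⊆
      Subtype.val ⁻¹' (Set.Iic M₂ ×ˢ Set.Iic M₂) := by
    rintro n ⟨h1, h2⟩
    exact ⟨h1, h2⟩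
  exact Set.Finite.subset (Set.Finite.preimage (Set.injOn_of_injective Subtype.val_injective)
    ((Set.finite_Iic M₂).prod (Set.finite_Iic M₂))) this

lemma Wt_le_finite (hα0 : 0 < α) (hα1 : α < 1) (hlam0 : 0 < lam) (C : ℝ) :
    {γ : MIdx | Wt (wB α lam) γ ≤ C}.Finite := by
  classical
  set m : ℝ := min lam (min α (1 - α)) with hm
  have hm0 : 0 < m := lt_min hlam0 (lt_min hα0 (by linarith))
  set V : Finset Var := (wB_var_finite hα0 hα1 hlam0 C).toFinset with hV
  set N : ℕ := Nat.ceil (C / m) with hN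
  have hterm : ∀ γ : MIdx, ∀ i : Var, wB α lam i * (γ i : ℝ) ≤ Wt (wB α lam) γ := by
    intro γ i
    by_cases hi : i ∈ γ.support
    · exact Finset.single_le_sum
        (fun j _ => mul_nonneg (wB_pos hα0 hα1 hlam0 j).le (Nat.cast_nonneg _)) hi
    · rw [Finsupp.notMem_support_iff.mp hi]
      simp only [Nat.cast_zero, mul_zero]
      exact Wt_wB_nonneg hα0 hα1 hlam0 γ
  refine Set.Finite.subset (Set.Finite.subset (V.finsupp fun _ => Finset.range (N + 1)).finite_toSet
    (fun γ hγ => hγ)) ?_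
  intro γ hγ
  simp only [Set.mem_setOf_eq] at hγ
  simp only [Finset.coe_mem, Set.mem_setOf_eq, Finset.mem_coe]
  rw [Finset.mem_finsupp_iff]
  constructor
  · intro i hi
    have h1 : 1 ≤ (γ i : ℝ) := by
      have := Finsupp.mem_support_iff.mp hi
      exact_mod_cast Nat.one_le_iff_ne_zero.mpr this
    have hwpos := wB_pos hα0 hα1 hlam0 i
    have : wB α lam i ≤ wB α lam i * (γ i : ℝ) := by nlinarith
    rw [hV, Set.Finite.mem_toFinset]
    exact le_trans this ((hterm γ i).trans hγ)
  · intro i _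
    rw [Finset.mem_range, Nat.lt_succ_iff]
    have h1 : m * (γ i : ℝ) ≤ wB α lam i * (γ i : ℝ) :=
      mul_le_mul_of_nonneg_right (wB_ge hα0 hα1 hlam0 i) (Nat.cast_nonneg _)
    have h2 : (γ i : ℝ) ≤ C / m := by
      rw [le_div_iff₀ hm0]
      calc (γ i : ℝ) * m = m * (γ i : ℝ) := by ring
        _ ≤ wB α lam i * (γ i : ℝ) := h1
        _ ≤ Wt (wB α lam) γ := hterm γ i
        _ ≤ C := hγ
    have h3 : (γ i : ℝ) ≤ (N : ℝ) := h2.trans (Nat.le_ceil _)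
    exact_mod_cast h3

lemma Gm_rowfin (hα0 : 0 < α) (hα1 : α < 1) (hlam0 : 0 < lam) (hlam : lam < α)
    (hpop : PopCond α pin) (β : MIdx) : {γ : MIdx | Gm pin β γ ≠ 0}.Finite := by
  refine Set.Finite.subset (Wt_le_finite hα0 hα1 hlam0 (Wt (wB α lam) β)) ?_
  intro γ hγ
  simp only [Set.mem_setOf_eq] at hγ ⊢
  by_cases hne : γ = β
  · rw [hne]
  · exact (Gm_strict hα0 hα1 hlam0 hlam hpop β γ hγ hne).2.le
lemma applyG_coeff (Γ : MIdx → MIdx → ℝ) (π : FPS) (β : MIdx) :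
    MvPowerSeries.coeff β (applyG Γ π) =
      ∑ᶠ γ : MIdx, Γ β γ * MvPowerSeries.coeff γ π := rfl

lemma applyG_eq_sum {Γ : MIdx → MIdx → ℝ} {β : MIdx} {T : Finset MIdx}
    (hT : ∀ γ, Γ β γ ≠ 0 → γ ∈ T) (π : FPS) :
    MvPowerSeries.coeff β (applyG Γ π) =
      ∑ γ ∈ T, Γ β γ * MvPowerSeries.coeff γ π := by
  rw [applyG_coeff]
  refine finsum_eq_sum_of_support_subset _ ?_
  intro γ hγ
  exact hT γ (left_ne_zero_of_mul hγ)

set_option maxHeartbeats 1000000 in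
lemma applyG_Gm_mul (hα0 : 0 < α) (hα1 : α < 1) (hlam0 : 0 < lam) (hlam : lam < α)
    (hpop : PopCond α pin) (π π' : FPS) :
    applyG (Gm pin) (π * π') = applyG (Gm pin) π * applyG (Gm pin) π' := by
  classical
  apply MvPowerSeries.ext
  intro β
  set A : Finset (MIdx × MIdx) := Finset.HasAntidiagonal.antidiagonal β with hA
  set T : Finset MIdx := A.biUnion
    (fun p => (Gm_rowfin hα0 hα1 hlam0 hlam hpop p.1).toFinset) with hT
  have hTmem : ∀ p ∈ A, ∀ a : MIdx, Gm pin p.1 a ≠ 0 → a ∈ T := by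
    intro p hp a ha
    rw [hT]
    exact Finset.mem_biUnion.mpr ⟨p, hp, (Set.Finite.mem_toFinset _).mpr ha⟩
  have hswap : ∀ p : MIdx × MIdx, p ∈ A → (p.2, p.1) ∈ A := by
    intro p hp
    rw [hA, Finset.HasAntidiagonal.mem_antidiagonal] at hp ⊢
    rw [add_comm]; exact hp
  have hGmmul : ∀ a b : MIdx, Gm pin β (a + b) =
      ∑ p ∈ A, Gm pin p.1 a * Gm pin p.2 b := by
    intro a b
    rw [hA]
    rw [Gm, PP_add, MvPowerSeries.coeff_mul]
    rfl
  have hmemT : ∀ {a b : MIdx}, Gm pin β (a + b) ≠ 0 → a ∈ T ∧ b ∈ T := by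
    intro a b hab
    rw [hGmmul] at hab
    obtain ⟨p, hp, hne⟩ := Finset.exists_ne_zero_of_sum_ne_zero hab
    exact ⟨hTmem p hp a (left_ne_zero_of_mul hne),
      hTmem (p.2, p.1) (hswap p hp) b (right_ne_zero_of_mul hne)⟩
  have hR : MvPowerSeries.coeff β (applyG (Gm pin) π * applyG (Gm pin) π') =
      ∑ x ∈ T ×ˢ T, Gm pin β (x.1 + x.2) *
        (MvPowerSeries.coeff x.1 π * MvPowerSeries.coeff x.2 π') := by
    calc MvPowerSeries.coeff β (applyG (Gm pin) π * applyG (Gm pin) π')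
        = ∑ p ∈ A, MvPowerSeries.coeff p.1 (applyG (Gm pin) π) *
            MvPowerSeries.coeff p.2 (applyG (Gm pin) π') := by
          rw [hA]; exact MvPowerSeries.coeff_mul _ _ _
      _ = ∑ p ∈ A, ∑ a ∈ T, ∑ b ∈ T,
            (Gm pin p.1 a * MvPowerSeries.coeff a π) *
              (Gm pin p.2 b * MvPowerSeries.coeff b π') := by
          refine Finset.sum_congr rfl fun p hp => ?_
          rw [applyG_eq_sum (fun γ h => hTmem p hp γ h) π,
            applyG_eq_sum (fun γ h => hTmem (p.2, p.1) (hswap p hp) γ h) π',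
            Finset.sum_mul_sum]
      _ = ∑ a ∈ T, ∑ b ∈ T, ∑ p ∈ A,
            (Gm pin p.1 a * MvPowerSeries.coeff a π) *
              (Gm pin p.2 b * MvPowerSeries.coeff b π') := by
          rw [Finset.sum_comm]
          exact Finset.sum_congr rfl fun a _ => Finset.sum_comm
      _ = ∑ a ∈ T, ∑ b ∈ T, Gm pin β (a + b) *
            (MvPowerSeries.coeff a π * MvPowerSeries.coeff b π') := by
          refine Finset.sum_congr rfl fun a _ => Finset.sum_congr rfl fun b _ => ?_
          rw [hGmmul, Finset.sum_mul]
          exact Finset.sum_congr rfl fun p _ => by ring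
      _ = ∑ x ∈ T ×ˢ T, Gm pin β (x.1 + x.2) *
            (MvPowerSeries.coeff x.1 π * MvPowerSeries.coeff x.2 π') :=
          (Finset.sum_product' _ _ _).symm
  set S₀ : Finset MIdx := (T ×ˢ T).image (fun x : MIdx × MIdx => x.1 + x.2) with hS₀
  have hS0 : ∀ γ, Gm pin β γ ≠ 0 → γ ∈ S₀ := by
    intro γ h
    have h' : Gm pin β (γ + 0) ≠ 0 := by rwa [add_zero]
    exact Finset.mem_image.mpr ⟨(γ, 0),
      Finset.mem_product.mpr ⟨(hmemT h').1, (hmemT h').2⟩, add_zero γ⟩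
  rw [applyG_eq_sum hS0 (π * π'), hR,
    ← Finset.sum_fiberwise_of_maps_to (s := T ×ˢ T) (t := S₀)
      (g := fun x : MIdx × MIdx => x.1 + x.2)
      (fun x hx => Finset.mem_image_of_mem _ hx)
      (fun x : MIdx × MIdx => Gm pin β (x.1 + x.2) *
        (MvPowerSeries.coeff x.1 π * MvPowerSeries.coeff x.2 π'))]
  refine Finset.sum_congr rfl fun γ hγ => ?_
  by_cases hGβγ : Gm pin β γ = 0
  · rw [hGβγ, zero_mul]
    refine (Finset.sum_eq_zero fun x hx => ?_).symm
    rw [Finset.mem_filter] at hx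
    rw [hx.2, hGβγ, zero_mul]
  · have hfil : (T ×ˢ T).filter (fun x : MIdx × MIdx => x.1 + x.2 = γ) =
        Finset.HasAntidiagonal.antidiagonal γ := by
      ext x
      rw [Finset.mem_filter, Finset.HasAntidiagonal.mem_antidiagonal]
      constructor
      · exact fun h => h.2
      · intro h
        have h' : Gm pin β (x.1 + x.2) ≠ 0 := by rwa [h]
        exact ⟨Finset.mem_product.mpr ⟨(hmemT h').1, (hmemT h').2⟩, h⟩
    rw [hfil, MvPowerSeries.coeff_mul, Finset.mul_sum]
    refine Finset.sum_congr rfl fun x hx => ?_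
    rw [Finset.HasAntidiagonal.mem_antidiagonal] at hx
    rw [hx]

lemma applyG_Gm_one : applyG (Gm pin) 1 = 1 := by
  classical
  apply MvPowerSeries.ext
  intro β
  rw [applyG_coeff]
  have h : ∀ γ : MIdx, γ ≠ 0 → Gm pin β γ * MvPowerSeries.coeff γ (1 : FPS) = 0 := by
    intro γ hγ
    rw [MvPowerSeries.coeff_one, if_neg hγ, mul_zero]
  rw [finsum_eq_single _ 0 h, MvPowerSeries.coeff_one, if_pos rfl, mul_one]
  rw [Gm, PP_zero]

lemma applyG_Gm_X (i : Var) : applyG (Gm pin) (MvPowerSeries.X i) = gg pin i := by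
  classical
  apply MvPowerSeries.ext
  intro β
  rw [applyG_coeff]
  have h : ∀ γ : MIdx, γ ≠ Finsupp.single i 1 →
      Gm pin β γ * MvPowerSeries.coeff γ (MvPowerSeries.X i : FPS) = 0 := by
    intro γ hγ
    rw [MvPowerSeries.coeff_X, if_neg hγ, mul_zero]
  rw [finsum_eq_single _ (Finsupp.single i 1) h, MvPowerSeries.coeff_X, if_pos rfl, mul_one,
    Gm, PP_single]
lemma applyG_prod {Γ' : MIdx → MIdx → ℝ}
    (h1 : applyG Γ' 1 = 1)
    (hm : ∀ π π' : FPS, applyG Γ' (π * π') = applyG Γ' π * applyG Γ' π')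
    {ι : Type*} (s : Finset ι) (f : ι → FPS) :
    applyG Γ' (∏ x ∈ s, f x) = ∏ x ∈ s, applyG Γ' (f x) := by
  classical
  induction s using Finset.induction_on with
  | empty => simpa using h1
  | insert _ _ h ih => rw [Finset.prod_insert h, Finset.prod_insert h, hm, ih]

lemma monomial_one_eq (γ : MIdx) :
    MvPowerSeries.monomial γ 1 = γ.prod fun i m => (MvPowerSeries.X i : FPS) ^ m := by
  induction γ using Finsupp.induction with
  | zero =>
    rw [Finsupp.prod_zero_index]
    exact MvPowerSeries.monomial_zero_one
  | single_add a b f hf hb ih =>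
    have hs : (Finsupp.single a b).prod (fun i m => (MvPowerSeries.X i : FPS) ^ m) =
        (MvPowerSeries.X a : FPS) ^ b := Finsupp.prod_single_index (pow_zero _)
    calc MvPowerSeries.monomial (Finsupp.single a b + f) 1
        = MvPowerSeries.monomial (Finsupp.single a b) 1 * MvPowerSeries.monomial f 1 := by
          rw [MvPowerSeries.monomial_mul_monomial, one_mul]
      _ = (MvPowerSeries.X a : FPS) ^ b * f.prod fun i m => (MvPowerSeries.X i : FPS) ^ m := by
          rw [MvPowerSeries.X_pow_eq, ih]
      _ = (Finsupp.single a b + f).prod fun i m => (MvPowerSeries.X i : FPS) ^ m := by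
          rw [Finsupp.prod_add_index' (fun i => pow_zero _) (fun i m n => pow_add _ _ _), hs]

lemma monomial_one_eq_prodX (γ : MIdx) :
    MvPowerSeries.monomial γ (1 : ℝ) = ∏ x ∈ Fac γ, MvPowerSeries.X x.1 := by
  rw [monomial_one_eq, prod_Fac]

lemma unique_aux {Γ' : MIdx → MIdx → ℝ} (hΓ' : IsReExpansion pin Γ') : Γ' = Gm pin := by
  obtain ⟨hrow, hmul, hone, hzk, hzn⟩ := hΓ'
  have hX : ∀ i : Var, applyG Γ' (MvPowerSeries.X i) = gg pin i := by
    intro i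
    cases i with
    | inl k => exact hzk k
    | inr n => exact hzn n
  have hP : ∀ γ : MIdx, applyG Γ' (MvPowerSeries.monomial γ 1) = PP pin γ := by
    intro γ
    rw [monomial_one_eq_prodX, applyG_prod hone hmul, PP_eq]
    exact Finset.prod_congr rfl fun x _ => hX x.1
  funext β γ
  have h1 : MvPowerSeries.coeff β (applyG Γ' (MvPowerSeries.monomial γ 1)) = Γ' β γ := by
    classical
    rw [applyG_coeff]
    have h : ∀ δ : MIdx, δ ≠ γ →
        Γ' β δ * MvPowerSeries.coeff δ (MvPowerSeries.monomial γ (1 : ℝ)) = 0 := by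
      intro δ hδ
      rw [MvPowerSeries.coeff_monomial, if_neg hδ, mul_zero]
    rw [finsum_eq_single _ γ h, MvPowerSeries.coeff_monomial, if_pos rfl, mul_one]
  rw [← h1, hP]
  rfl
end Stmt13

/-- Existence, uniqueness and triangularity of the re-expansion map (Lemma 7.1):
given a family `{π⁽ⁿ⁾}_{n ∈ ℕ²}` satisfying the population condition, there is a
unique row-finite matrix inducing a unital algebra endomorphism of ℝ[[z_k,z_n]]
with the prescribed action on the coordinates; moreover it is strictly triangular:
`(Γ*)_β^γ = δ_β^γ` unless both `|γ| < |β|` and `γ ≺ β`. -/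
theorem stmt_13 (α lam : ℝ) (hα0 : 0 < α) (hα1 : α < 1) (hlam0 : 0 < lam) (hlam : lam < α)
    (pin : ℕ × ℕ → FPS) (hpop : PopCond α pin) :
    ∃ Γ : MIdx → MIdx → ℝ,
      (IsReExpansion pin Γ ∧
        ∀ β γ : MIdx, Γ β γ ≠ (if γ = β then 1 else 0) →
          hom α γ < hom α β ∧ ordP α lam γ < ordP α lam β) ∧
      ∀ Γ' : MIdx → MIdx → ℝ, IsReExpansion pin Γ' → Γ' = Γ := by
  refine ⟨Stmt13.Gm pin,
    ⟨⟨fun β => Stmt13.Gm_rowfin hα0 hα1 hlam0 hlam hpop β,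
      Stmt13.applyG_Gm_mul hα0 hα1 hlam0 hlam hpop,
      Stmt13.applyG_Gm_one,
      fun k => Stmt13.applyG_Gm_X (Sum.inl k),
      fun n => Stmt13.applyG_Gm_X (Sum.inr n)⟩, ?_⟩,
    fun Γ' h => Stmt13.unique_aux h⟩
  intro β γ h
  by_cases hne : γ = β
  · subst hne
    rw [if_pos rfl] at h
    exact absurd (Stmt13.Gm_diag hα0 hα1 hlam0 hlam hpop γ) h
  · rw [if_neg hne] at h
    obtain ⟨h1, h2⟩ := Stmt13.Gm_strict hα0 hα1 hlam0 hlam hpop β γ h hne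
    rw [Stmt13.hom_eq, Stmt13.hom_eq, Stmt13.ordP_eq, Stmt13.ordP_eq]
    exact ⟨by linarith, by linarith⟩
end
end

section
/- Existence of inverses (second part of Lemma 7.2): Let {π⁽ⁿ⁾}_{n ∈ ℕ²} ⊂ ℝ[[z_k,z_n]] satisfy the population condition, with associated re-expansion map Γ*. Then there exists a family {π̃⁽ⁿ⁾}_{n ∈ ℕ²} ⊂ ℝ[[z_k,z_n]] satisfying the population condition π̃⁽ⁿ⁾_β = 0 unless |n| < |β|, such that Γ*(π̃⁽ⁿ⁾) = −π⁽ⁿ⁾ for every n ∈ ℕ², and the re-expansion map Γ̃* associated to {π̃⁽ⁿ⁾} is a two-sided inverse of Γ*: Γ* ∘ Γ̃* = Γ̃* ∘ Γ* = id on ℝ[[z_k,z_n]]. -/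
open MvPowerSeries

noncomputable section

section Aux
open Finset MvPowerSeries

/-- additive degree `dE α β = α[β] + |β|_p = hom α β - α` -/
def dE (α : ℝ) (β : MIdx) : ℝ := α * (bracketZ β : ℝ) + homP β

lemma hom_eq_dE (α : ℝ) (β : MIdx) : hom α β = α + dE α β := by
  unfold hom dE; ring

/-- `Σ_k k β(k)` -/
def kN (β : MIdx) : ℕ := β.sum fun j m => (match j with | Sum.inl k => k | Sum.inr _ => 0) * m
/-- `Σ_n β(n)` -/
def cN (β : MIdx) : ℕ := β.sum fun j m => (match j with | Sum.inl _ => 0 | Sum.inr _ => 1) * m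
/-- `Σ_n |n| β(n)` -/
def pN (β : MIdx) : ℕ :=
  β.sum fun j m => (match j with | Sum.inl _ => 0 | Sum.inr n => n.val.1 + 2 * n.val.2) * m

lemma bracketZ_eq (β : MIdx) : bracketZ β = (kN β : ℤ) - (cN β : ℤ) := by
  unfold bracketZ kN cN Finsupp.sum
  rw [Nat.cast_sum, Nat.cast_sum, ← Finset.sum_sub_distrib]
  refine Finset.sum_congr rfl fun v _ => ?_
  rcases v with k | n <;> push_cast <;> ring

lemma homP_eq (β : MIdx) : homP β = (pN β : ℝ) := by
  unfold homP pN Finsupp.sum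
  rw [Nat.cast_sum]
  refine Finset.sum_congr rfl fun v _ => ?_
  rcases v with k | n <;> push_cast <;> ring

lemma cN_le_pN (β : MIdx) : cN β ≤ pN β := by
  unfold cN pN Finsupp.sum
  refine Finset.sum_le_sum fun v _ => ?_
  rcases v with k | n
  · simp
  · have h' : n.val.1 ≠ 0 ∨ n.val.2 ≠ 0 := by
      rcases n with ⟨⟨a, b⟩, h⟩
      by_contra hc; push_neg at hc
      exact h (by exact Prod.ext hc.1 hc.2)
    have : 1 ≤ n.val.1 + 2 * n.val.2 := by omega
    exact Nat.mul_le_mul_right _ this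

lemma dE_eq (α : ℝ) (β : MIdx) :
    dE α β = α * ((kN β : ℝ) - (cN β : ℝ)) + (pN β : ℝ) := by
  unfold dE
  rw [bracketZ_eq, homP_eq]; push_cast; ring

lemma dE_nonneg {α : ℝ} (hα0 : 0 < α) (hα1 : α < 1) (β : MIdx) : 0 ≤ dE α β := by
  rw [dE_eq]
  have h1 : (cN β : ℝ) ≤ (pN β : ℝ) := by exact_mod_cast cN_le_pN β
  have h2 : (0:ℝ) ≤ (kN β : ℝ) := by positivity
  nlinarith

lemma bracketZ_add (β γ : MIdx) : bracketZ (β + γ) = bracketZ β + bracketZ γ := by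
  unfold bracketZ
  apply Finsupp.sum_add_index' <;> intro a <;> try intro b₁ b₂
  · rcases a with k | n <;> simp
  · rcases a with k | n <;> push_cast <;> ring

lemma homP_add (β γ : MIdx) : homP (β + γ) = homP β + homP γ := by
  unfold homP
  apply Finsupp.sum_add_index' <;> intro a <;> try intro b₁ b₂
  · rcases a with k | n <;> simp
  · rcases a with k | n <;> push_cast <;> ring

lemma dE_add (α : ℝ) (β γ : MIdx) : dE α (β + γ) = dE α β + dE α γ := by
  unfold dE
  rw [bracketZ_add, homP_add]; push_cast; ring

lemma bracketZ_single (v : Var) : bracketZ (Finsupp.single v 1) =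
    (match v with | Sum.inl k => (k:ℤ) | Sum.inr _ => -1) := by
  unfold bracketZ
  rw [Finsupp.sum_single_index]
  · simp
  · rcases v with k | n <;> simp

lemma homP_single (v : Var) : homP (Finsupp.single v 1) =
    (match v with | Sum.inl _ => (0:ℝ) | Sum.inr n => (n.val.1 : ℝ) + 2 * n.val.2) := by
  unfold homP
  rw [Finsupp.sum_single_index]
  · simp
  · rcases v with k | n <;> simp

lemma dE_single_inl (α : ℝ) (k : ℕ) : dE α (Finsupp.single (Sum.inl k) 1) = α * k := by
  unfold dE
  rw [bracketZ_single, homP_single]; push_cast; ring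

lemma dE_single_inr (α : ℝ) (n : Pos2) :
    dE α (Finsupp.single (Sum.inr n) 1) = ((n.val.1 : ℝ) + 2 * n.val.2) - α := by
  unfold dE
  rw [bracketZ_single, homP_single]; push_cast; ring

lemma dE_zero (α : ℝ) : dE α 0 = 0 := by
  unfold dE bracketZ homP
  simp

lemma brk_add_pN_nonneg (β : MIdx) : 0 ≤ bracketZ β + (pN β : ℤ) := by
  rw [bracketZ_eq]
  have := cN_le_pN β
  omega

end Aux
section Aux2
open Finset MvPowerSeries

lemma finsum_eq_sum_of {ι : Type*} (f : ι → ℝ) (s : Finset ι)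
    (h : ∀ x, f x ≠ 0 → x ∈ s) : ∑ᶠ x, f x = ∑ x ∈ s, f x :=
  finsum_eq_finset_sum_of_support_subset f (fun x hx => h x hx)

lemma exists_ne_zero_of_finsum_ne_zero {ι : Type*} {f : ι → ℝ}
    (h : (∑ᶠ x, f x) ≠ 0) : ∃ x, f x ≠ 0 := by
  by_contra hc; push_neg at hc
  exact h (finsum_eq_zero_of_forall_eq_zero hc)

lemma coeff_apply' (π : FPS) (β : MIdx) : MvPowerSeries.coeff β π = π β := rfl

lemma exists_factor_of_coeff_mul_ne_zero {φ ψ : FPS} {β : MIdx}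
    (h : MvPowerSeries.coeff β (φ * ψ) ≠ 0) :
    ∃ β₁ β₂ : MIdx, β₁ + β₂ = β ∧ MvPowerSeries.coeff β₁ φ ≠ 0 ∧
      MvPowerSeries.coeff β₂ ψ ≠ 0 := by
  classical
  rw [MvPowerSeries.coeff_mul] at h
  obtain ⟨p, hp, hne⟩ := Finset.exists_ne_zero_of_sum_ne_zero h
  exact ⟨p.1, p.2, Finset.HasAntidiagonal.mem_antidiagonal.mp hp,
    fun h0 => hne (by rw [h0, zero_mul]), fun h0 => hne (by rw [h0, mul_zero])⟩

/-- identity matrix -/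
def idM : MIdx → MIdx → ℝ := fun β γ => if β = γ then 1 else 0

/-- matrix product (finsum over the middle index) -/
def mulM (A B : MIdx → MIdx → ℝ) : MIdx → MIdx → ℝ := fun β γ => ∑ᶠ δ, A β δ * B δ γ

lemma rowFinite_idM : RowFinite idM := by
  intro β
  apply Set.Finite.subset (Set.finite_singleton β)
  intro γ hγ
  simp only [Set.mem_setOf_eq, idM] at hγ
  by_contra hne
  exact hγ (if_neg (fun h => hne (by simp [h])))

/-- row of a row-finite matrix as a Finset -/
noncomputable def rowF {A : MIdx → MIdx → ℝ} (hA : RowFinite A) (β : MIdx) : Finset MIdx :=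
  (hA β).toFinset

lemma mem_rowF {A : MIdx → MIdx → ℝ} (hA : RowFinite A) {β γ : MIdx}
    (h : A β γ ≠ 0) : γ ∈ rowF hA β := (hA β).mem_toFinset.mpr h

lemma mulM_eq_sum {A B : MIdx → MIdx → ℝ} (hA : RowFinite A) (β γ : MIdx) :
    mulM A B β γ = ∑ δ ∈ rowF hA β, A β δ * B δ γ := by
  apply finsum_eq_sum_of
  intro δ hδ
  exact mem_rowF hA (fun h0 => hδ (by rw [h0, zero_mul]))

lemma rowFinite_mulM {A B : MIdx → MIdx → ℝ} (hA : RowFinite A) (hB : RowFinite B) :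
    RowFinite (mulM A B) := by
  intro β
  apply Set.Finite.subset ((rowF hA β).finite_toSet.biUnion (fun δ _ => hB δ))
  intro γ hγ
  simp only [Set.mem_setOf_eq] at hγ
  rw [mulM_eq_sum hA] at hγ
  obtain ⟨δ, hδs, hδ⟩ := Finset.exists_ne_zero_of_sum_ne_zero hγ
  exact Set.mem_biUnion hδs (fun h0 => hδ (by rw [h0, mul_zero]))

lemma mulM_ne_zero {A B : MIdx → MIdx → ℝ} {β γ : MIdx} (h : mulM A B β γ ≠ 0) :
    ∃ δ, A β δ ≠ 0 ∧ B δ γ ≠ 0 := by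
  obtain ⟨δ, hδ⟩ := exists_ne_zero_of_finsum_ne_zero h
  exact ⟨δ, fun h0 => hδ (by rw [h0, zero_mul]), fun h0 => hδ (by rw [h0, mul_zero])⟩

lemma mulM_idM_left {A : MIdx → MIdx → ℝ} : mulM idM A = A := by
  funext β γ
  rw [mulM]
  rw [finsum_eq_single _ β (fun δ hδ => by simp [idM, Ne.symm hδ])]
  simp [idM]

lemma mulM_idM_right {A : MIdx → MIdx → ℝ} : mulM A idM = A := by
  funext β γ
  rw [mulM]
  rw [finsum_eq_single _ γ (fun δ hδ => by simp [idM, hδ])]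
  simp [idM]

lemma mulM_assoc {A B C : MIdx → MIdx → ℝ} (hA : RowFinite A) (hB : RowFinite B) :
    mulM (mulM A B) C = mulM A (mulM B C) := by
  funext β γ
  have hAB := rowFinite_mulM hA hB
  set t : Finset MIdx := (rowF hA β).biUnion (fun δ => rowF hB δ) with ht
  have hsub : ∀ δ, mulM A B β δ ≠ 0 → δ ∈ t := by
    intro δ hδ
    obtain ⟨ε, hε1, hε2⟩ := mulM_ne_zero hδ
    exact Finset.mem_biUnion.mpr ⟨ε, mem_rowF hA hε1, mem_rowF hB hε2⟩
  calc mulM (mulM A B) C β γ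
      = ∑ δ ∈ t, mulM A B β δ * C δ γ := by
        apply finsum_eq_sum_of
        intro δ hδ
        exact hsub δ (fun h0 => hδ (by rw [h0, zero_mul]))
    _ = ∑ δ ∈ t, (∑ ε ∈ rowF hA β, A β ε * B ε δ) * C δ γ := by
        refine Finset.sum_congr rfl fun δ _ => ?_
        rw [mulM_eq_sum hA]
    _ = ∑ ε ∈ rowF hA β, A β ε * (∑ δ ∈ t, B ε δ * C δ γ) := by
        simp_rw [Finset.sum_mul, mul_assoc]
        rw [Finset.sum_comm]
        simp_rw [← Finset.mul_sum]
    _ = ∑ ε ∈ rowF hA β, A β ε * mulM B C ε γ := by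
        refine Finset.sum_congr rfl fun ε hε => ?_
        congr 1
        rw [mulM]
        refine (finsum_eq_sum_of _ _ ?_).symm
        intro δ hδ
        have hBδ : B ε δ ≠ 0 := fun h0 => hδ (by rw [h0, zero_mul])
        by_cases hAε : A β ε ≠ 0
        · exact Finset.mem_biUnion.mpr ⟨ε, mem_rowF hA hAε, mem_rowF hB hBδ⟩
        · push_neg at hAε
          -- ε not in row of A: but ε ∈ rowF hA β means A β ε ≠ 0
          exact absurd hAε ((hA β).mem_toFinset.mp hε)
    _ = mulM A (mulM B C) β γ := by
        rw [mulM]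
        refine (finsum_eq_sum_of _ _ ?_).symm
        intro ε hε
        exact mem_rowF hA (fun h0 => hε (by rw [h0, zero_mul]))

lemma applyG_eq_sum {Γ : MIdx → MIdx → ℝ} (π : FPS) (β : MIdx) (s : Finset MIdx)
    (hs : ∀ γ, Γ β γ ≠ 0 → γ ∈ s) :
    applyG Γ π β = ∑ γ ∈ s, Γ β γ * MvPowerSeries.coeff γ π := by
  apply finsum_eq_sum_of
  intro γ hγ
  exact hs γ (fun h0 => hγ (by rw [h0, zero_mul]))

lemma applyG_ne_zero {Γ : MIdx → MIdx → ℝ} {π : FPS} {β : MIdx}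
    (h : applyG Γ π β ≠ 0) : ∃ γ, Γ β γ ≠ 0 ∧ MvPowerSeries.coeff γ π ≠ 0 := by
  obtain ⟨γ, hγ⟩ := exists_ne_zero_of_finsum_ne_zero h
  exact ⟨γ, fun h0 => hγ (by rw [h0, zero_mul]), fun h0 => hγ (by rw [h0, mul_zero])⟩

lemma applyG_idM (π : FPS) : applyG idM π = π := by
  funext β
  rw [applyG]
  rw [finsum_eq_single _ β (fun δ hδ => by simp [idM, Ne.symm hδ])]
  simp [idM, coeff_apply']

lemma applyG_mulM {A B : MIdx → MIdx → ℝ} (hA : RowFinite A) (hB : RowFinite B) (π : FPS) :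
    applyG (mulM A B) π = applyG A (applyG B π) := by
  funext β
  set t : Finset MIdx := (rowF hA β).biUnion (fun δ => rowF hB δ) with ht
  have hsub : ∀ γ, mulM A B β γ ≠ 0 → γ ∈ t := by
    intro γ hγ
    obtain ⟨ε, hε1, hε2⟩ := mulM_ne_zero hγ
    exact Finset.mem_biUnion.mpr ⟨ε, mem_rowF hA hε1, mem_rowF hB hε2⟩
  calc applyG (mulM A B) π β
      = ∑ γ ∈ t, mulM A B β γ * MvPowerSeries.coeff γ π := applyG_eq_sum π β t hsub
    _ = ∑ γ ∈ t, (∑ δ ∈ rowF hA β, A β δ * B δ γ) * MvPowerSeries.coeff γ π := by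
        refine Finset.sum_congr rfl fun γ _ => ?_
        rw [mulM_eq_sum hA]
    _ = ∑ δ ∈ rowF hA β, A β δ * (∑ γ ∈ t, B δ γ * MvPowerSeries.coeff γ π) := by
        simp_rw [Finset.sum_mul, mul_assoc]
        rw [Finset.sum_comm]
        simp_rw [← Finset.mul_sum]
    _ = ∑ δ ∈ rowF hA β, A β δ * MvPowerSeries.coeff δ (applyG B π) := by
        refine Finset.sum_congr rfl fun δ hδ => ?_
        congr 1
        rw [coeff_apply', applyG]
        refine (finsum_eq_sum_of _ _ ?_).symm
        intro γ hγ
        have hBδ : B δ γ ≠ 0 := fun h0 => hγ (by rw [h0, zero_mul])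
        exact Finset.mem_biUnion.mpr ⟨δ, hδ, mem_rowF hB hBδ⟩
    _ = applyG A (applyG B π) β := (applyG_eq_sum _ β _ (fun δ h => mem_rowF hA h)).symm

lemma applyG_add {Γ : MIdx → MIdx → ℝ} (hΓ : RowFinite Γ) (x y : FPS) :
    applyG Γ (x + y) = applyG Γ x + applyG Γ y := by
  funext β
  have h1 := applyG_eq_sum (Γ := Γ) (x + y) β (rowF hΓ β) (fun γ h => mem_rowF hΓ h)
  have h2 := applyG_eq_sum (Γ := Γ) x β (rowF hΓ β) (fun γ h => mem_rowF hΓ h)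
  have h3 := applyG_eq_sum (Γ := Γ) y β (rowF hΓ β) (fun γ h => mem_rowF hΓ h)
  show applyG Γ (x + y) β = applyG Γ x β + applyG Γ y β
  rw [h1, h2, h3, ← Finset.sum_add_distrib]
  refine Finset.sum_congr rfl fun γ _ => ?_
  rw [map_add]; ring

lemma applyG_smul {Γ : MIdx → MIdx → ℝ} (hΓ : RowFinite Γ) (c : ℝ) (x : FPS) :
    applyG Γ (c • x) = c • applyG Γ x := by
  funext β
  have h1 := applyG_eq_sum (Γ := Γ) (c • x) β (rowF hΓ β) (fun γ h => mem_rowF hΓ h)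
  have h2 := applyG_eq_sum (Γ := Γ) x β (rowF hΓ β) (fun γ h => mem_rowF hΓ h)
  show applyG Γ (c • x) β = c • applyG Γ x β
  rw [h1, smul_eq_mul, h2, Finset.mul_sum]
  refine Finset.sum_congr rfl fun γ _ => ?_
  rw [map_smul, smul_eq_mul]; ring

lemma applyG_neg {Γ : MIdx → MIdx → ℝ} (hΓ : RowFinite Γ) (x : FPS) :
    applyG Γ (-x) = -applyG Γ x := by
  have := applyG_smul hΓ (-1) x
  simpa using this

lemma applyG_sub {Γ : MIdx → MIdx → ℝ} (hΓ : RowFinite Γ) (x y : FPS) :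
    applyG Γ (x - y) = applyG Γ x - applyG Γ y := by
  rw [sub_eq_add_neg, applyG_add hΓ, applyG_neg hΓ, sub_eq_add_neg]

lemma applyG_finset_sum {Γ : MIdx → MIdx → ℝ} (hΓ : RowFinite Γ) {ι : Type*}
    (s : Finset ι) (f : ι → FPS) :
    applyG Γ (∑ i ∈ s, f i) = ∑ i ∈ s, applyG Γ (f i) := by
  classical
  induction s using Finset.induction_on with
  | empty =>
      rw [Finset.sum_empty, Finset.sum_empty]
      funext β
      show applyG Γ 0 β = 0
      rw [applyG]
      exact finsum_eq_zero_of_forall_eq_zero (fun γ => by rw [map_zero, mul_zero])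
  | @insert a s hx ih =>
      rw [Finset.sum_insert hx, applyG_add hΓ, ih, Finset.sum_insert hx]

lemma applyG_monomial {Γ : MIdx → MIdx → ℝ} (γ : MIdx) (β : MIdx) :
    applyG Γ (MvPowerSeries.monomial γ 1) β = Γ β γ := by
  classical
  rw [applyG]
  rw [finsum_eq_single _ γ (fun δ hδ => by
    rw [MvPowerSeries.coeff_monomial, if_neg hδ, mul_zero])]
  rw [MvPowerSeries.coeff_monomial, if_pos rfl, mul_one]

end Aux2
section Tri
open Finset MvPowerSeries

/-- the nilpotent part of a re-expansion matrix -/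
def NM (Γ : MIdx → MIdx → ℝ) : MIdx → MIdx → ℝ := fun β γ => Γ β γ - idM β γ

lemma rowFinite_NM {Γ : MIdx → MIdx → ℝ} (hΓ : RowFinite Γ) : RowFinite (NM Γ) := by
  intro β
  apply Set.Finite.subset ((hΓ β).union (rowFinite_idM β))
  intro γ hγ
  simp only [Set.mem_setOf_eq, NM] at hγ
  by_contra hc
  simp only [Set.mem_union, Set.mem_setOf_eq, not_or, not_not] at hc
  exact hγ (by rw [hc.1, hc.2, sub_zero])

def sz (γ : MIdx) : ℕ := γ.sum fun _ m => m

lemma sz_eq_zero {γ : MIdx} (h : sz γ = 0) : γ = 0 := by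
  unfold sz Finsupp.sum at h
  ext v
  by_contra hv
  have hvs : v ∈ γ.support := Finsupp.mem_support_iff.mpr (by simpa using hv)
  have := (Finset.sum_eq_zero_iff.mp h) v hvs
  simp only [Finsupp.coe_zero, Pi.zero_apply] at hv
  exact hv this

lemma exists_decomp {γ : MIdx} (h : γ ≠ 0) :
    ∃ (v : Var) (γ' : MIdx), γ = γ' + Finsupp.single v 1 ∧ sz γ' + 1 = sz γ := by
  obtain ⟨v, hv⟩ := Finsupp.support_nonempty_iff.mpr h
  have hv1 : 1 ≤ γ v := Nat.one_le_iff_ne_zero.mpr (Finsupp.mem_support_iff.mp hv)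
  refine ⟨v, γ - Finsupp.single v 1, ?_, ?_⟩
  · ext w
    simp only [Finsupp.add_apply, Finsupp.tsub_apply, Finsupp.single_apply]
    by_cases hw : v = w
    · subst hw; simp; omega
    · simp [hw]
  · have hdec : (γ - Finsupp.single v 1) + Finsupp.single v 1 = γ := by
      ext w
      simp only [Finsupp.add_apply, Finsupp.tsub_apply, Finsupp.single_apply]
      by_cases hw : v = w
      · subst hw; simp; omega
      · simp [hw]
    have hadd : sz ((γ - Finsupp.single v 1) + Finsupp.single v 1)
        = sz (γ - Finsupp.single v 1) + sz (Finsupp.single v 1) := by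
      unfold sz
      exact Finsupp.sum_add_index' (fun _ => rfl) (fun _ _ _ => rfl)
    have hs1 : sz (Finsupp.single v 1) = 1 := by
      unfold sz
      rw [Finsupp.sum_single_index rfl]
    rw [hdec] at hadd
    rw [hadd, hs1]

section withHyp
variable {α : ℝ} {pin : ℕ × ℕ → FPS} {Γ : MIdx → MIdx → ℝ}

lemma coeff_mul_X {φ : FPS} {m : ℕ} {γ : MIdx}
    (h : MvPowerSeries.coeff γ (φ * zk m) ≠ 0) :
    ∃ γ₁, γ = γ₁ + Finsupp.single (Sum.inl m) 1 ∧ MvPowerSeries.coeff γ₁ φ ≠ 0 := by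
  classical
  obtain ⟨β₁, β₂, hsum, h1, h2⟩ := exists_factor_of_coeff_mul_ne_zero h
  rw [zk, MvPowerSeries.coeff_X] at h2
  by_cases hβ2 : β₂ = Finsupp.single (Sum.inl m) 1
  · exact ⟨β₁, by rw [← hsum, hβ2], h1⟩
  · exact absurd (if_neg hβ2) h2

lemma Γ_entry (β γ : MIdx) : Γ β γ = MvPowerSeries.coeff β
    (applyG Γ (MvPowerSeries.monomial γ 1)) := by
  rw [coeff_apply', applyG_monomial]

lemma suppX (hα0 : 0 < α) (hα1 : α < 1) (hpop : PopCond α pin) (hG : IsReExpansion pin Γ)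
    (v : Var) (β : MIdx) (h : MvPowerSeries.coeff β (applyG Γ (MvPowerSeries.X v)) ≠ 0) :
    β = Finsupp.single v 1 ∨ dE α (Finsupp.single v 1) < dE α β := by
  classical
  rcases v with k | n
  · have hzk : (MvPowerSeries.X (Sum.inl k) : FPS) = zk k := rfl
    rw [hzk, hG.2.2.2.1 k, coeff_apply'] at h
    obtain ⟨l, hl⟩ := exists_ne_zero_of_finsum_ne_zero h
    have hl' : MvPowerSeries.coeff β ((pin (0,0)) ^ l * zk (k + l)) ≠ 0 :=
      fun h0 => hl (by rw [h0, mul_zero])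
    rcases l with _ | l'
    · rw [pow_zero, one_mul, zk, MvPowerSeries.coeff_X] at hl'
      left
      by_contra hne
      rw [Nat.add_zero] at hl'
      exact hl' (if_neg hne)
    · obtain ⟨γ₁, hγ, _⟩ := coeff_mul_X hl'
      right
      rw [dE_single_inl, hγ, dE_add, dE_single_inl]
      have := dE_nonneg hα0 hα1 γ₁
      have hc : (k : ℝ) < ((k + (l' + 1) : ℕ) : ℝ) := by push_cast; linarith
      nlinarith
  · have hzn : (MvPowerSeries.X (Sum.inr n) : FPS) = zn n := rfl
    rw [hzn, hG.2.2.2.2 n, map_add] at h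
    by_cases hβ : β = Finsupp.single (Sum.inr n) 1
    · exact Or.inl hβ
    · right
      have h0 : MvPowerSeries.coeff β (zn n) = 0 := by
        rw [zn, MvPowerSeries.coeff_X]; exact if_neg hβ
      rw [h0, zero_add] at h
      have := hpop n.val β h
      rw [hom_eq_dE] at this
      rw [dE_single_inr]
      linarith

lemma diagX (hα0 : 0 < α) (hα1 : α < 1) (hpop : PopCond α pin) (hG : IsReExpansion pin Γ)
    (v : Var) :
    MvPowerSeries.coeff (Finsupp.single v 1) (applyG Γ (MvPowerSeries.X v)) = 1 := by
  classical
  rcases v with k | n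
  · have hzk : (MvPowerSeries.X (Sum.inl k) : FPS) = zk k := rfl
    rw [hzk, hG.2.2.2.1 k, coeff_apply']
    show (∑ᶠ l : ℕ, ((k + l).choose k : ℝ) *
      MvPowerSeries.coeff (Finsupp.single (Sum.inl k) 1) ((pin (0,0)) ^ l * zk (k + l))) = 1
    rw [finsum_eq_single _ 0]
    · rw [pow_zero, one_mul, Nat.add_zero, Nat.choose_self, Nat.cast_one, one_mul,
        zk, MvPowerSeries.coeff_X, if_pos rfl]
    · intro l hl
      rcases l with _ | l'
      · exact absurd rfl hl
      · have hz : MvPowerSeries.coeff (Finsupp.single (Sum.inl k) 1)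
            ((pin (0,0)) ^ (l' + 1) * zk (k + (l' + 1))) = 0 := by
          by_contra hne
          obtain ⟨γ₁, hγ, _⟩ := coeff_mul_X hne
          have := congrFun (congrArg (fun f : MIdx => (f : Var → ℕ)) hγ) (Sum.inl (k + (l' + 1)))
          simp only [Finsupp.coe_add, Pi.add_apply, Finsupp.single_apply] at this
          rw [if_neg (by intro hh; simp only [Sum.inl.injEq] at hh; omega),
            if_pos trivial] at this
          omega
        rw [hz, mul_zero]
  · have hzn : (MvPowerSeries.X (Sum.inr n) : FPS) = zn n := rfl
    rw [hzn, hG.2.2.2.2 n, map_add]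
    have h1 : MvPowerSeries.coeff (Finsupp.single (Sum.inr n) 1) (zn n) = 1 := by
      rw [zn, MvPowerSeries.coeff_X, if_pos rfl]
    have h2 : MvPowerSeries.coeff (Finsupp.single (Sum.inr n) 1) (pin n.val) = 0 := by
      by_contra hne
      have := hpop n.val _ hne
      rw [hom_eq_dE, dE_single_inr] at this
      linarith
    rw [h1, h2, add_zero]

lemma Gamma_tri (hα0 : 0 < α) (hα1 : α < 1) (hpop : PopCond α pin)
    (hG : IsReExpansion pin Γ) :
    ∀ (S : ℕ) (γ : MIdx), sz γ ≤ S →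
      (∀ β, Γ β γ ≠ 0 → γ = β ∨ dE α γ < dE α β) ∧ Γ γ γ = 1 := by
  classical
  intro S
  induction S with
  | zero =>
      intro γ hγ
      have h0 : γ = 0 := sz_eq_zero (Nat.le_zero.mp hγ)
      subst h0
      have hent : ∀ β : MIdx, Γ β 0 = if β = 0 then 1 else 0 := by
        intro β
        rw [Γ_entry (Γ := Γ) β 0, MvPowerSeries.monomial_zero_one, hG.2.2.1, MvPowerSeries.coeff_one]
      constructor
      · intro β h
        rw [hent] at h
        by_cases hβ : β = 0
        · exact Or.inl hβ.symm
        · exact absurd (if_neg hβ) h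
      · rw [hent, if_pos rfl]
  | succ S ih =>
      intro γ hγ
      by_cases hγ0 : γ = 0
      · subst hγ0
        exact ih 0 (by unfold sz; simp)
      obtain ⟨v, γ', hdec, hszd⟩ := exists_decomp hγ0
      have hγ' := ih γ' (by omega)
      have hmon : (MvPowerSeries.monomial γ 1 : FPS)
          = MvPowerSeries.monomial γ' 1 * MvPowerSeries.X v := by
        rw [hdec, MvPowerSeries.X, MvPowerSeries.monomial_mul_monomial, mul_one]
      have hcoeff : ∀ β, Γ β γ = ∑ p ∈ Finset.HasAntidiagonal.antidiagonal β,
          Γ p.1 γ' * MvPowerSeries.coeff p.2 (applyG Γ (MvPowerSeries.X v)) := by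
        intro β
        rw [Γ_entry (Γ := Γ) β γ, hmon, hG.2.1, MvPowerSeries.coeff_mul]
        exact Finset.sum_congr rfl fun p _ => by rw [← Γ_entry (Γ := Γ) p.1 γ']
      have hdγ : dE α γ = dE α γ' + dE α (Finsupp.single v 1) := by
        rw [hdec, dE_add]
      constructor
      · intro β h
        rw [hcoeff] at h
        obtain ⟨p, hp, hpne⟩ := Finset.exists_ne_zero_of_sum_ne_zero h
        have h1 : Γ p.1 γ' ≠ 0 := fun h0 => hpne (by rw [h0, zero_mul])
        have h2 : MvPowerSeries.coeff p.2 (applyG Γ (MvPowerSeries.X v)) ≠ 0 :=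
          fun h0 => hpne (by rw [h0, mul_zero])
        have e1 := hγ'.1 p.1 h1
        have e2 := suppX hα0 hα1 hpop hG v p.2 h2
        have hd1 : dE α γ' ≤ dE α p.1 := by
          rcases e1 with e | e
          · exact e ▸ le_rfl
          · exact le_of_lt e
        have hd2 : dE α (Finsupp.single v 1) ≤ dE α p.2 := by
          rcases e2 with e | e
          · exact e ▸ le_rfl
          · exact le_of_lt e
        have hsum : p.1 + p.2 = β := Finset.HasAntidiagonal.mem_antidiagonal.mp hp
        have hdE : dE α β = dE α p.1 + dE α p.2 := by rw [← hsum, dE_add]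
        by_cases heq : dE α γ = dE α β
        · left
          have hq1 : dE α γ' = dE α p.1 := by linarith
          have hq2 : dE α (Finsupp.single v 1) = dE α p.2 := by linarith
          have hp1 : γ' = p.1 := by
            rcases e1 with e | e
            · exact e
            · exact absurd hq1 (ne_of_lt e)
          have hp2 : p.2 = Finsupp.single v 1 := by
            rcases e2 with e | e
            · exact e
            · exact absurd hq2.symm (ne_of_gt e)
          rw [hdec, ← hsum, hp1, hp2]
        · right
          have : dE α γ ≤ dE α β := by linarith
          exact lt_of_le_of_ne this heq
      · rw [hcoeff]
        rw [Finset.sum_eq_single_of_mem (γ', Finsupp.single v 1)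
          (Finset.HasAntidiagonal.mem_antidiagonal.mpr hdec.symm)]
        · rw [hγ'.2, diagX hα0 hα1 hpop hG, one_mul]
        · intro p hp hne
          by_contra hne0
          have h1 : Γ p.1 γ' ≠ 0 := fun h0 => hne0 (by rw [h0, zero_mul])
          have h2 : MvPowerSeries.coeff p.2 (applyG Γ (MvPowerSeries.X v)) ≠ 0 :=
            fun h0 => hne0 (by rw [h0, mul_zero])
          have e1 := hγ'.1 p.1 h1
          have e2 := suppX hα0 hα1 hpop hG v p.2 h2
          have hd1 : dE α γ' ≤ dE α p.1 := by
            rcases e1 with e | e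
            · exact e ▸ le_rfl
            · exact le_of_lt e
          have hd2 : dE α (Finsupp.single v 1) ≤ dE α p.2 := by
            rcases e2 with e | e
            · exact e ▸ le_rfl
            · exact le_of_lt e
          have hsum : p.1 + p.2 = γ := Finset.HasAntidiagonal.mem_antidiagonal.mp hp
          have hdE : dE α γ = dE α p.1 + dE α p.2 := by rw [← hsum, dE_add]
          have hp1 : γ' = p.1 := by
            rcases e1 with e | e
            · exact e
            · exact absurd (by linarith : dE α γ' = dE α p.1) (ne_of_lt e)
          have hp2 : p.2 = Finsupp.single v 1 := by
            rcases e2 with e | e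
            · exact e
            · exact absurd (by linarith : dE α (Finsupp.single v 1) = dE α p.2).symm (ne_of_gt e)
          exact hne (Prod.ext hp1.symm hp2)

lemma Γ_le (hα0 : 0 < α) (hα1 : α < 1) (hpop : PopCond α pin) (hG : IsReExpansion pin Γ)
    {β γ : MIdx} (h : Γ β γ ≠ 0) : γ = β ∨ dE α γ < dE α β :=
  (Gamma_tri hα0 hα1 hpop hG (sz γ) γ le_rfl).1 β h

lemma Γ_dE_le (hα0 : 0 < α) (hα1 : α < 1) (hpop : PopCond α pin) (hG : IsReExpansion pin Γ)
    {β γ : MIdx} (h : Γ β γ ≠ 0) : dE α γ ≤ dE α β := by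
  rcases Γ_le hα0 hα1 hpop hG h with e | e
  · rw [e]
  · linarith

lemma Γ_diag (hα0 : 0 < α) (hα1 : α < 1) (hpop : PopCond α pin) (hG : IsReExpansion pin Γ)
    (β : MIdx) : Γ β β = 1 :=
  (Gamma_tri hα0 hα1 hpop hG (sz β) β le_rfl).2

lemma NM_lt (hα0 : 0 < α) (hα1 : α < 1) (hpop : PopCond α pin) (hG : IsReExpansion pin Γ)
    {β γ : MIdx} (h : NM Γ β γ ≠ 0) : dE α γ < dE α β := by
  by_cases hβγ : β = γ
  · subst hβγ
    rw [NM, Γ_diag hα0 hα1 hpop hG, idM, if_pos rfl, sub_self] at h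
    exact absurd rfl h
  · have hΓne : Γ β γ ≠ 0 := by
      rw [NM, idM, if_neg hβγ, sub_zero] at h
      exact h
    rcases Γ_le hα0 hα1 hpop hG hΓne with e | e
    · exact absurd e.symm hβγ
    · exact e

end withHyp
end Tri
section Inv
open Finset MvPowerSeries

def Npow (Γ : MIdx → MIdx → ℝ) : ℕ → (MIdx → MIdx → ℝ)
  | 0 => idM
  | j+1 => mulM (NM Γ) (Npow Γ j)

variable {α : ℝ} {pin : ℕ × ℕ → FPS} {Γ : MIdx → MIdx → ℝ}

lemma rowFinite_Npow (hΓ : RowFinite Γ) (j : ℕ) : RowFinite (Npow Γ j) := by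
  induction j with
  | zero => exact rowFinite_idM
  | succ j ih => exact rowFinite_mulM (rowFinite_NM hΓ) ih

lemma Npow_succ_right (hΓ : RowFinite Γ) (j : ℕ) :
    Npow Γ (j+1) = mulM (Npow Γ j) (NM Γ) := by
  induction j with
  | zero =>
      show mulM (NM Γ) idM = mulM idM (NM Γ)
      rw [mulM_idM_left, mulM_idM_right]
  | succ j ih =>
      show mulM (NM Γ) (Npow Γ (j+1)) = mulM (Npow Γ (j+1)) (NM Γ)
      calc mulM (NM Γ) (Npow Γ (j+1)) = mulM (NM Γ) (mulM (Npow Γ j) (NM Γ)) := by rw [← ih]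
        _ = mulM (mulM (NM Γ) (Npow Γ j)) (NM Γ) :=
            (mulM_assoc (rowFinite_NM hΓ) (rowFinite_Npow hΓ j)).symm
        _ = mulM (Npow Γ (j+1)) (NM Γ) := rfl

lemma Npow_chain : ∀ (j : ℕ) (β γ : MIdx), Npow Γ j β γ ≠ 0 →
    ∃ f : ℕ → MIdx, f 0 = β ∧ f j = γ ∧ ∀ i < j, NM Γ (f i) (f (i+1)) ≠ 0 := by
  intro j
  induction j with
  | zero =>
      intro β γ h
      have hβγ : β = γ := by
        by_contra hne
        exact h (if_neg hne)
      exact ⟨fun _ => β, rfl, hβγ, fun i hi => absurd hi (by omega)⟩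
  | succ j ih =>
      intro β γ h
      obtain ⟨δ, h1, h2⟩ := mulM_ne_zero h
      obtain ⟨f', hf0, hfj, hstep⟩ := ih δ γ h2
      refine ⟨fun i => Nat.rec β (fun i' _ => f' i') i, rfl, hfj, ?_⟩
      intro i hi
      cases i with
      | zero =>
          show NM Γ β (f' 0) ≠ 0
          rw [hf0]; exact h1
      | succ i' => exact hstep i' (by omega)

lemma chain_lt (hα0 : 0 < α) (hα1 : α < 1) (hpop : PopCond α pin)
    (hG : IsReExpansion pin Γ) {f : ℕ → MIdx} {j : ℕ}
    (hstep : ∀ i < j, NM Γ (f i) (f (i+1)) ≠ 0) :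
    ∀ i' ≤ j, ∀ i < i', dE α (f i') < dE α (f i) := by
  intro i'
  induction i' with
  | zero => exact fun _ i hi => absurd hi (by omega)
  | succ i'' ih =>
      intro hle i hi
      have hstep' : dE α (f (i''+1)) < dE α (f i'') :=
        NM_lt hα0 hα1 hpop hG (hstep i'' (by omega))
      rcases Nat.lt_succ_iff_lt_or_eq.mp hi with hlt | heq
      · exact lt_trans hstep' (ih (by omega) i hlt)
      · rw [heq]; exact hstep'

lemma dE_eq' (α : ℝ) (δ : MIdx) : dE α δ = α * (bracketZ δ : ℝ) + (pN δ : ℝ) := by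
  rw [dE, homP_eq]

/-- truncation bound for the Neumann series -/
noncomputable def Jb (α : ℝ) (β : MIdx) : ℕ :=
  ((Finset.Icc (-(⌊dE α β / (1-α)⌋₊ : ℤ)) ⌊dE α β / α⌋) ×ˢ
    Finset.range (⌊dE α β / (1-α)⌋₊ + 1)).card

lemma mem_Fb (hα0 : 0 < α) (hα1 : α < 1) {δ β : MIdx} (h : dE α δ ≤ dE α β) :
    (bracketZ δ, pN δ) ∈ (Finset.Icc (-(⌊dE α β / (1-α)⌋₊ : ℤ)) ⌊dE α β / α⌋) ×ˢ
      Finset.range (⌊dE α β / (1-α)⌋₊ + 1) := by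
  have h1α : (0:ℝ) < 1 - α := by linarith
  have hd : dE α δ = α * (bracketZ δ : ℝ) + (pN δ : ℝ) := dE_eq' α δ
  have hbp : (0:ℝ) ≤ (bracketZ δ : ℝ) + (pN δ : ℝ) := by
    have := brk_add_pN_nonneg δ
    exact_mod_cast this
  have hp0 : (0:ℝ) ≤ (pN δ : ℝ) := by positivity
  have hpb : (pN δ : ℝ) ≤ dE α β / (1-α) := by
    rw [le_div_iff₀ h1α]
    nlinarith
  have hpmem : pN δ ∈ Finset.range (⌊dE α β / (1-α)⌋₊ + 1) := by
    rw [Finset.mem_range, Nat.lt_succ_iff]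
    exact Nat.le_floor hpb
  have hbub : (bracketZ δ : ℝ) ≤ dE α β / α := by
    rw [le_div_iff₀ hα0]
    nlinarith
  have hbu : bracketZ δ ≤ ⌊dE α β / α⌋ := Int.le_floor.mpr hbub
  have hbl : -(⌊dE α β / (1-α)⌋₊ : ℤ) ≤ bracketZ δ := by
    have hpn : pN δ ≤ ⌊dE α β / (1-α)⌋₊ := Nat.le_floor hpb
    have := brk_add_pN_nonneg δ
    omega
  exact Finset.mem_product.mpr ⟨Finset.mem_Icc.mpr ⟨hbl, hbu⟩, hpmem⟩

lemma Jb_pos (hα0 : 0 < α) (hα1 : α < 1) {β : MIdx} (hD : 0 ≤ dE α β) : 1 ≤ Jb α β := by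
  rw [Jb, Nat.one_le_iff_ne_zero, ← Nat.pos_iff_ne_zero, Finset.card_pos]
  refine ⟨((0:ℤ), (0:ℕ)), Finset.mem_product.mpr ⟨Finset.mem_Icc.mpr ⟨?_, ?_⟩, ?_⟩⟩
  · omega
  · exact Int.le_floor.mpr (by push_cast; positivity)
  · simp

lemma Jb_mono (hα0 : 0 < α) (hα1 : α < 1) {β' β : MIdx} (h : dE α β' ≤ dE α β) :
    Jb α β' ≤ Jb α β := by
  have h1α : (0:ℝ) < 1 - α := by linarith
  apply Finset.card_le_card
  apply Finset.product_subset_product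
  · apply Finset.Icc_subset_Icc
    · have := Nat.floor_mono ((div_le_div_iff_of_pos_right h1α).mpr h)
      omega
    · exact Int.floor_mono ((div_le_div_iff_of_pos_right hα0).mpr h)
  · rw [Finset.range_subset_range]
    have := Nat.floor_mono ((div_le_div_iff_of_pos_right h1α).mpr h)
    omega

lemma Npow_bound (hα0 : 0 < α) (hα1 : α < 1) (hpop : PopCond α pin)
    (hG : IsReExpansion pin Γ) {j : ℕ} {β γ : MIdx} (h : Npow Γ j β γ ≠ 0) :
    j < Jb α β := by
  obtain ⟨f, hf0, hfj, hstep⟩ := Npow_chain j β γ h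
  have hle : ∀ i ≤ j, dE α (f i) ≤ dE α β := by
    intro i hi
    rcases Nat.eq_zero_or_pos i with h0 | hpos
    · rw [h0, hf0]
    · rw [← hf0]
      exact le_of_lt (chain_lt hα0 hα1 hpop hG hstep i hi 0 hpos)
  have hinj : Set.InjOn (fun i => (bracketZ (f i), pN (f i))) ↑(Finset.range (j+1)) := by
    intro i1 h1 i2 h2 heq
    simp only [Finset.coe_range, Set.mem_Iio] at h1 h2
    by_contra hne
    have key : ∀ i i' , i < i' → i' < j + 1 →
        (bracketZ (f i), pN (f i)) ≠ (bracketZ (f i'), pN (f i')) := by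
      intro i i' hlt hub
      have hd : dE α (f i') < dE α (f i) := chain_lt hα0 hα1 hpop hG hstep i' (by omega) i hlt
      intro hpair
      have e1 : bracketZ (f i) = bracketZ (f i') := congrArg Prod.fst hpair
      have e2 : pN (f i) = pN (f i') := congrArg Prod.snd hpair
      rw [dE_eq', dE_eq', e1, e2] at hd
      exact lt_irrefl _ hd
    rcases lt_trichotomy i1 i2 with hlt | heqq | hgt
    · exact key i1 i2 hlt h2 heq
    · exact hne heqq
    · exact key i2 i1 hgt h1 heq.symm
  have hmaps : ∀ i ∈ Finset.range (j+1), (bracketZ (f i), pN (f i)) ∈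
      (Finset.Icc (-(⌊dE α β / (1-α)⌋₊ : ℤ)) ⌊dE α β / α⌋) ×ˢ
        Finset.range (⌊dE α β / (1-α)⌋₊ + 1) := by
    intro i hi
    exact mem_Fb hα0 hα1 (hle i (Finset.mem_range_succ_iff.mp hi))
  have := Finset.card_le_card_of_injOn _ hmaps hinj
  rw [Finset.card_range] at this
  rw [Jb]
  omega

lemma Npow_zero_of_ge (hα0 : 0 < α) (hα1 : α < 1) (hpop : PopCond α pin)
    (hG : IsReExpansion pin Γ) {j : ℕ} {β γ : MIdx} (h : Jb α β ≤ j) :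
    Npow Γ j β γ = 0 := by
  by_contra hne
  have := Npow_bound hα0 hα1 hpop hG hne
  omega

/-- the inverse re-expansion matrix: a Neumann series -/
noncomputable def Gt (α : ℝ) (Γ : MIdx → MIdx → ℝ) : MIdx → MIdx → ℝ :=
  fun β γ => ∑ j ∈ Finset.range (Jb α β), (-1:ℝ)^j * Npow Γ j β γ

lemma Gt_eq_range (hα0 : 0 < α) (hα1 : α < 1) (hpop : PopCond α pin)
    (hG : IsReExpansion pin Γ) (β γ : MIdx) {K : ℕ} (hK : Jb α β ≤ K) :
    Gt α Γ β γ = ∑ j ∈ Finset.range K, (-1:ℝ)^j * Npow Γ j β γ := by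
  rw [Gt]
  apply Finset.sum_subset (Finset.range_subset_range.mpr hK)
  intro j _ hj
  rw [Finset.mem_range, not_lt] at hj
  rw [Npow_zero_of_ge hα0 hα1 hpop hG hj, mul_zero]

lemma rowFinite_Gt (hΓ : RowFinite Γ) : RowFinite (Gt α Γ) := by
  intro β
  apply Set.Finite.subset ((Finset.range (Jb α β)).finite_toSet.biUnion
    (fun j _ => rowFinite_Npow hΓ j β))
  intro γ hγ
  simp only [Set.mem_setOf_eq, Gt] at hγ
  obtain ⟨j, hjs, hj⟩ := Finset.exists_ne_zero_of_sum_ne_zero hγ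
  exact Set.mem_biUnion hjs (fun h0 => hj (by rw [h0, mul_zero]))

lemma telescope (b : ℕ → ℝ) (K : ℕ) (hK : b K = 0) :
    ∑ j ∈ Finset.range K, (-1:ℝ)^j * (b j + b (j+1)) = b 0 := by
  have hterm : ∀ j, (-1:ℝ)^j * (b j + b (j+1))
      = (fun i => (-1:ℝ)^i * b i) j - (fun i => (-1:ℝ)^i * b i) (j+1) := by
    intro j
    simp only [pow_succ]
    ring
  rw [Finset.sum_congr rfl (fun j _ => hterm j), Finset.sum_range_sub']
  simp [hK]

lemma mulM_Γ_Gt (hα0 : 0 < α) (hα1 : α < 1) (hpop : PopCond α pin)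
    (hG : IsReExpansion pin Γ) : mulM Γ (Gt α Γ) = idM := by
  funext β γ
  have hrow : RowFinite Γ := hG.1
  set K := Jb α β with hKdef
  have step1 : mulM Γ (Gt α Γ) β γ
      = ∑ᶠ δ, Γ β δ * (∑ j ∈ Finset.range K, (-1:ℝ)^j * Npow Γ j δ γ) := by
    rw [mulM]
    apply finsum_congr
    intro δ
    by_cases hδ : Γ β δ = 0
    · rw [hδ, zero_mul, zero_mul]
    · rw [Gt_eq_range hα0 hα1 hpop hG δ γ (Jb_mono hα0 hα1 (Γ_dE_le hα0 hα1 hpop hG hδ))]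
  have step2 : ∑ᶠ δ, Γ β δ * (∑ j ∈ Finset.range K, (-1:ℝ)^j * Npow Γ j δ γ)
      = ∑ j ∈ Finset.range K, (-1:ℝ)^j * mulM Γ (Npow Γ j) β γ := by
    rw [finsum_eq_sum_of _ (rowF hrow β)
      (fun δ hδ => mem_rowF hrow (fun h0 => hδ (by rw [h0, zero_mul])))]
    simp_rw [Finset.mul_sum]
    rw [Finset.sum_comm]
    refine Finset.sum_congr rfl fun j _ => ?_
    rw [mulM_eq_sum hrow, Finset.mul_sum]
    refine Finset.sum_congr rfl fun δ _ => ?_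
    ring
  have step3 : ∀ j, mulM Γ (Npow Γ j) β γ = Npow Γ j β γ + Npow Γ (j+1) β γ := by
    intro j
    have hdecomp : ∀ δ, Γ β δ = idM β δ + NM Γ β δ := fun δ => by rw [NM]; ring
    have hfin1 : (Function.support fun δ => idM β δ * Npow Γ j δ γ).Finite := by
      apply Set.Finite.subset (Set.finite_singleton β)
      intro δ hδ
      simp only [Function.mem_support] at hδ
      by_contra hne
      exact hδ (by rw [idM, if_neg (fun h => hne (by rw [← h]; exact rfl)), zero_mul])
    have hfin2 : (Function.support fun δ => NM Γ β δ * Npow Γ j δ γ).Finite := by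
      apply Set.Finite.subset (rowFinite_NM hrow β)
      intro δ hδ
      simp only [Function.mem_support] at hδ
      exact fun h0 => hδ (by rw [h0, zero_mul])
    calc mulM Γ (Npow Γ j) β γ
        = ∑ᶠ δ, (idM β δ * Npow Γ j δ γ + NM Γ β δ * Npow Γ j δ γ) := by
          rw [mulM]
          apply finsum_congr
          intro δ
          rw [hdecomp δ]; ring
      _ = (∑ᶠ δ, idM β δ * Npow Γ j δ γ) + ∑ᶠ δ, NM Γ β δ * Npow Γ j δ γ :=
          finsum_add_distrib hfin1 hfin2
      _ = Npow Γ j β γ + Npow Γ (j+1) β γ := by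
          congr 1
          · rw [finsum_eq_single _ β (fun δ hδ => by rw [idM, if_neg (Ne.symm hδ), zero_mul])]
            rw [idM, if_pos rfl, one_mul]
  rw [step1, step2]
  have := telescope (fun j => Npow Γ j β γ) K
    (Npow_zero_of_ge hα0 hα1 hpop hG (le_of_eq hKdef.symm))
  rw [Finset.sum_congr rfl (fun j _ => by rw [step3 j])]
  rw [this]
  rfl

lemma mulM_Gt_Γ (hα0 : 0 < α) (hα1 : α < 1) (hpop : PopCond α pin)
    (hG : IsReExpansion pin Γ) : mulM (Gt α Γ) Γ = idM := by
  funext β γ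
  have hrow : RowFinite Γ := hG.1
  set K := Jb α β with hKdef
  set S : Finset MIdx := (Finset.range K).biUnion
    (fun j => rowF (rowFinite_Npow hrow j) β) with hS
  have hsupp : ∀ δ, Gt α Γ β δ * Γ δ γ ≠ 0 → δ ∈ S := by
    intro δ hδ
    have h1 : Gt α Γ β δ ≠ 0 := fun h0 => hδ (by rw [h0, zero_mul])
    rw [Gt] at h1
    obtain ⟨j, hjs, hj⟩ := Finset.exists_ne_zero_of_sum_ne_zero h1
    have : Npow Γ j β δ ≠ 0 := fun h0 => hj (by rw [h0, mul_zero])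
    exact Finset.mem_biUnion.mpr ⟨j, hjs, mem_rowF _ this⟩
  have step2 : mulM (Gt α Γ) Γ β γ
      = ∑ j ∈ Finset.range K, (-1:ℝ)^j * mulM (Npow Γ j) Γ β γ := by
    rw [mulM, finsum_eq_sum_of _ S hsupp]
    have : ∀ δ ∈ S, Gt α Γ β δ * Γ δ γ
        = ∑ j ∈ Finset.range K, (-1:ℝ)^j * (Npow Γ j β δ * Γ δ γ) := by
      intro δ _
      rw [Gt, Finset.sum_mul]
      refine Finset.sum_congr rfl fun j _ => ?_
      ring
    rw [Finset.sum_congr rfl this, Finset.sum_comm]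
    refine Finset.sum_congr rfl fun j hj => ?_
    rw [← Finset.mul_sum]
    congr 1
    rw [mulM]
    symm
    apply finsum_eq_sum_of
    intro δ hδ
    have hnz : Npow Γ j β δ ≠ 0 := fun h0 => hδ (by rw [h0, zero_mul])
    exact Finset.mem_biUnion.mpr ⟨j, hj, mem_rowF _ hnz⟩
  have step3 : ∀ j, mulM (Npow Γ j) Γ β γ = Npow Γ j β γ + Npow Γ (j+1) β γ := by
    intro j
    have hdecomp : ∀ δ, Γ δ γ = idM δ γ + NM Γ δ γ := fun δ => by rw [NM]; ring
    have hfin1 : (Function.support fun δ => Npow Γ j β δ * idM δ γ).Finite := by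
      apply Set.Finite.subset (rowFinite_Npow hrow j β)
      intro δ hδ
      simp only [Function.mem_support] at hδ
      exact fun h0 => hδ (by rw [h0, zero_mul])
    have hfin2 : (Function.support fun δ => Npow Γ j β δ * NM Γ δ γ).Finite := by
      apply Set.Finite.subset (rowFinite_Npow hrow j β)
      intro δ hδ
      simp only [Function.mem_support] at hδ
      exact fun h0 => hδ (by rw [h0, zero_mul])
    calc mulM (Npow Γ j) Γ β γ
        = ∑ᶠ δ, (Npow Γ j β δ * idM δ γ + Npow Γ j β δ * NM Γ δ γ) := by
          rw [mulM]
          apply finsum_congr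
          intro δ
          rw [hdecomp δ]; ring
      _ = (∑ᶠ δ, Npow Γ j β δ * idM δ γ) + ∑ᶠ δ, Npow Γ j β δ * NM Γ δ γ :=
          finsum_add_distrib hfin1 hfin2
      _ = Npow Γ j β γ + Npow Γ (j+1) β γ := by
          congr 1
          · rw [finsum_eq_single _ γ (fun δ hδ => by rw [idM, if_neg hδ, mul_zero])]
            rw [idM, if_pos rfl, mul_one]
          · rw [Npow_succ_right hrow j]
            rfl
  rw [step2]
  have := telescope (fun j => Npow Γ j β γ) K
    (Npow_zero_of_ge hα0 hα1 hpop hG (le_of_eq hKdef.symm))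
  rw [Finset.sum_congr rfl (fun j _ => by rw [step3 j])]
  rw [this]
  rfl

lemma applyG_Γ_Gt (hα0 : 0 < α) (hα1 : α < 1) (hpop : PopCond α pin)
    (hG : IsReExpansion pin Γ) (π : FPS) :
    applyG Γ (applyG (Gt α Γ) π) = π := by
  rw [← applyG_mulM hG.1 (rowFinite_Gt hG.1), mulM_Γ_Gt hα0 hα1 hpop hG, applyG_idM]

lemma applyG_Gt_Γ (hα0 : 0 < α) (hα1 : α < 1) (hpop : PopCond α pin)
    (hG : IsReExpansion pin Γ) (π : FPS) :
    applyG (Gt α Γ) (applyG Γ π) = π := by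
  rw [← applyG_mulM (rowFinite_Gt hG.1) hG.1, mulM_Gt_Γ hα0 hα1 hpop hG, applyG_idM]

end Inv
section Binom
open Finset MvPowerSeries

variable {α : ℝ} {pin : ℕ × ℕ → FPS} {Γ : MIdx → MIdx → ℝ}

lemma tri_sum (g : ℕ → ℕ → ℝ) (T : ℕ) :
    ∑ l ∈ Finset.range (T+1), ∑ j ∈ Finset.range (T+1-l), g l j
      = ∑ s ∈ Finset.range (T+1), ∑ l ∈ Finset.range (s+1), g l (s-l) := by
  induction T with
  | zero => simp
  | succ T ih =>
      have h0 : T+1-(T+1) = 0 := by omega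
      calc ∑ l ∈ Finset.range (T+2), ∑ j ∈ Finset.range (T+2-l), g l j
          = (∑ l ∈ Finset.range (T+1), ∑ j ∈ Finset.range (T+2-l), g l j)
            + ∑ j ∈ Finset.range (T+2-(T+1)), g (T+1) j := Finset.sum_range_succ _ _
        _ = (∑ l ∈ Finset.range (T+1),
              (∑ j ∈ Finset.range (T+1-l), g l j + g l (T+1-l))) + g (T+1) 0 := by
            congr 1
            · refine Finset.sum_congr rfl fun l hl => ?_
              rw [Finset.mem_range] at hl
              have h2 : T+2-l = (T+1-l)+1 := by omega
              rw [h2, Finset.sum_range_succ]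
            · have h3 : T+2-(T+1) = 1 := by omega
              rw [h3, Finset.sum_range_one]
        _ = ((∑ l ∈ Finset.range (T+1), ∑ j ∈ Finset.range (T+1-l), g l j)
              + ∑ l ∈ Finset.range (T+1), g l (T+1-l)) + g (T+1) 0 := by
            rw [Finset.sum_add_distrib]
        _ = (∑ s ∈ Finset.range (T+1), ∑ l ∈ Finset.range (s+1), g l (s-l))
              + ∑ l ∈ Finset.range (T+2), g l (T+1-l) := by
            rw [ih, add_assoc, Finset.sum_range_succ (fun l => g l (T+1-l)) (T+1), h0]
        _ = ∑ s ∈ Finset.range (T+2), ∑ l ∈ Finset.range (s+1), g l (s-l) := by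
            rw [Finset.sum_range_succ
              (fun s => ∑ l ∈ Finset.range (s+1), g l (s-l)) (T+1)]

/-- truncated version of `gammaZk` -/
noncomputable def Gtr (q : FPS) (m T : ℕ) : FPS :=
  ∑ j ∈ Finset.range (T+1), (((m+j).choose m : ℝ)) • (q ^ j * zk (m+j))

lemma l_bound (hα0 : 0 < α) (hα1 : α < 1) {q : FPS} {m l : ℕ} {γ : MIdx}
    (h : MvPowerSeries.coeff γ (q ^ l * zk (m+l)) ≠ 0) :
    α * (m+l : ℕ) ≤ dE α γ := by
  obtain ⟨γ1, hdec, _⟩ := coeff_mul_X h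
  rw [hdec, dE_add, dE_single_inl]
  have := dE_nonneg hα0 hα1 γ1
  linarith

lemma coeff_gammaZk_eq_Gtr (hα0 : 0 < α) (hα1 : α < 1) (q : FPS) (m T : ℕ) (γ : MIdx)
    (hT : dE α γ < α * ((m : ℝ) + T + 1)) :
    MvPowerSeries.coeff γ (gammaZk q m) = MvPowerSeries.coeff γ (Gtr q m T) := by
  rw [coeff_apply' (gammaZk q m)]
  show (∑ᶠ l : ℕ, ((m+l).choose m : ℝ) * MvPowerSeries.coeff γ (q ^ l * zk (m+l))) = _
  rw [finsum_eq_sum_of _ (Finset.range (T+1)) ?hsupp]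
  case hsupp =>
    intro l hl
    have hc : MvPowerSeries.coeff γ (q ^ l * zk (m+l)) ≠ 0 :=
      fun h0 => hl (by rw [h0, mul_zero])
    have := l_bound hα0 hα1 hc
    rw [Finset.mem_range]
    by_contra hgt
    push_neg at hgt
    have : α * ((m : ℝ) + T + 1) ≤ α * ((m + l : ℕ) : ℝ) := by
      apply mul_le_mul_of_nonneg_left _ hα0.le
      push_cast
      have : (T:ℝ) + 1 ≤ l := by exact_mod_cast hgt
      linarith
    linarith
  · rw [Gtr, map_sum]
    refine Finset.sum_congr rfl fun l _ => ?_
    rw [map_smul, smul_eq_mul]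

lemma applyG_pow (hG : IsReExpansion pin Γ) (x : FPS) (l : ℕ) :
    applyG Γ (x ^ l) = (applyG Γ x) ^ l := by
  induction l with
  | zero => rw [pow_zero, pow_zero, hG.2.2.1]
  | succ l ih => rw [pow_succ, pow_succ, hG.2.1, ih]

lemma coeff_mul_trunc (hα0 : 0 < α) (hα1 : α < 1) (φ : FPS) {y y' : FPS} {β : MIdx}
    (hy : ∀ γ, dE α γ ≤ dE α β → MvPowerSeries.coeff γ y = MvPowerSeries.coeff γ y') :
    MvPowerSeries.coeff β (φ * y) = MvPowerSeries.coeff β (φ * y') := by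
  classical
  rw [MvPowerSeries.coeff_mul, MvPowerSeries.coeff_mul]
  refine Finset.sum_congr rfl fun p hp => ?_
  congr 1
  apply hy
  have hsum := Finset.HasAntidiagonal.mem_antidiagonal.mp hp
  have : dE α β = dE α p.1 + dE α p.2 := by rw [← hsum, dE_add]
  have := dE_nonneg hα0 hα1 p.1
  linarith

lemma applyG_gammaZk_inv (hα0 : 0 < α) (hα1 : α < 1) (hpop : PopCond α pin)
    (hG : IsReExpansion pin Γ) {x : FPS} (hx : applyG Γ x = -(pin (0,0))) (k : ℕ) :
    applyG Γ (gammaZk x k) = zk k := by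
  classical
  funext β
  set q : FPS := pin (0,0) with hq
  set D := dE α β with hD
  set T := ⌊D / α⌋₊ with hT
  have hD0 : 0 ≤ D := dE_nonneg hα0 hα1 β
  have hDT : D < α * ((T:ℝ)+1) := by
    have h1 : D / α < (T:ℝ) + 1 := Nat.lt_floor_add_one _
    calc D = (D/α) * α := by field_simp
      _ < ((T:ℝ)+1) * α := by exact mul_lt_mul_of_pos_right h1 hα0
      _ = α * ((T:ℝ)+1) := by ring
  have step1 : applyG Γ (gammaZk x k) β = applyG Γ (Gtr x k T) β := by
    apply finsum_congr; intro γ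
    by_cases hγ : Γ β γ = 0
    · rw [hγ, zero_mul, zero_mul]
    · congr 1
      apply coeff_gammaZk_eq_Gtr hα0 hα1
      have hd := Γ_dE_le hα0 hα1 hpop hG hγ
      have hkT : α * ((T:ℝ)+1) ≤ α * ((k:ℝ)+T+1) := by
        apply mul_le_mul_of_nonneg_left _ hα0.le
        have : (0:ℝ) ≤ (k:ℝ) := by positivity
        linarith
      calc dE α γ ≤ D := hd
        _ < α * ((T:ℝ)+1) := hDT
        _ ≤ α * ((k:ℝ)+T+1) := hkT
  have step2 : applyG Γ (Gtr x k T)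
      = ∑ l ∈ Finset.range (T+1), (((k+l).choose k : ℝ)) • ((-q)^l * gammaZk q (k+l)) := by
    rw [Gtr, applyG_finset_sum hG.1]
    refine Finset.sum_congr rfl fun l _ => ?_
    rw [applyG_smul hG.1, hG.2.1, applyG_pow hG, hx, hG.2.2.2.1]
  rw [step1, step2]
  show MvPowerSeries.coeff β
    (∑ l ∈ Finset.range (T+1), (((k+l).choose k : ℝ)) • ((-q)^l * gammaZk q (k+l)))
      = MvPowerSeries.coeff β (zk k)
  rw [map_sum]
  have step3 : ∀ l ∈ Finset.range (T+1),
      MvPowerSeries.coeff β (((k+l).choose k : ℝ) • ((-q)^l * gammaZk q (k+l)))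
        = ∑ j ∈ Finset.range (T+1-l),
          ((-1:ℝ)^l * ((k+l).choose k : ℝ) * (((k+l)+j).choose (k+l) : ℝ))
            * MvPowerSeries.coeff β (q^(l+j) * zk ((k+l)+j)) := by
    intro l hl
    rw [Finset.mem_range] at hl
    have hTl : T+1-l = (T-l)+1 := by omega
    rw [map_smul, smul_eq_mul]
    have htr : MvPowerSeries.coeff β ((-q)^l * gammaZk q (k+l))
        = MvPowerSeries.coeff β ((-q)^l * Gtr q (k+l) (T-l)) := by
      apply coeff_mul_trunc hα0 hα1
      intro γ hγ
      apply coeff_gammaZk_eq_Gtr hα0 hα1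
      have hklT : α * ((T:ℝ)+1) ≤ α * (((k+l : ℕ):ℝ) + (T-l : ℕ) + 1) := by
        apply mul_le_mul_of_nonneg_left _ hα0.le
        have h1 : ((T:ℝ)) ≤ ((k+l:ℕ):ℝ) + ((T-l:ℕ):ℝ) := by
          push_cast
          have : (l:ℝ) + ((T-l:ℕ):ℝ) = (T:ℝ) := by
            have : l + (T-l) = T := by omega
            exact_mod_cast congrArg (fun n : ℕ => (n:ℝ)) this
          nlinarith [Nat.cast_nonneg (α := ℝ) k]
        linarith
      calc dE α γ ≤ D := hγ
        _ < α * ((T:ℝ)+1) := hDT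
        _ ≤ _ := hklT
    rw [htr, Gtr, Finset.mul_sum, hTl]
    rw [map_sum, Finset.mul_sum]
    refine Finset.sum_congr rfl fun j _ => ?_
    have hrearr : (-q)^l * (((((k+l)+j).choose (k+l) : ℝ)) • (q ^ j * zk ((k+l)+j)))
        = ((-1:ℝ)^l * ((((k+l)+j).choose (k+l) : ℝ))) • (q^(l+j) * zk ((k+l)+j)) := by
      have hneg : (-q)^l = ((-1:ℝ)^l) • q^l := by
        rw [← smul_pow]
        congr 1
        rw [neg_one_smul]
      rw [hneg, smul_mul_assoc, mul_smul_comm, smul_smul]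
      congr 1
      rw [← mul_assoc, ← pow_add]
    rw [hrearr, map_smul, smul_eq_mul]
    ring
  rw [Finset.sum_congr rfl step3, tri_sum]
  have step4 : ∀ s ∈ Finset.range (T+1),
      (∑ l ∈ Finset.range (s+1),
        ((-1:ℝ)^l * ((k+l).choose k : ℝ) * (((k+l)+(s-l)).choose (k+l) : ℝ))
          * MvPowerSeries.coeff β (q^(l+(s-l)) * zk ((k+l)+(s-l))))
        = (if s = 0 then (1:ℝ) else 0) * MvPowerSeries.coeff β (q^s * zk (k+s)) := by
    intro s _
    have hinner : ∀ l ∈ Finset.range (s+1),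
        ((-1:ℝ)^l * ((k+l).choose k : ℝ) * (((k+l)+(s-l)).choose (k+l) : ℝ))
          * MvPowerSeries.coeff β (q^(l+(s-l)) * zk ((k+l)+(s-l)))
        = ((-1:ℝ)^l * (((k+s).choose k : ℝ) * ((s.choose l : ℝ))))
          * MvPowerSeries.coeff β (q^s * zk (k+s)) := by
      intro l hl
      rw [Finset.mem_range] at hl
      have hls : l + (s-l) = s := by omega
      have hkls : (k+l)+(s-l) = k+s := by omega
      rw [hls, hkls]
      have hch : ((k+s).choose (k+l) : ℝ) * ((k+l).choose k : ℝ)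
          = ((k+s).choose k : ℝ) * (s.choose l : ℝ) := by
        have := Nat.choose_mul (n := k+s) (show k ≤ k+l by omega)
        have h2 : (k+s) - k = s := by omega
        have h3 : (k+l) - k = l := by omega
        rw [h2, h3] at this
        exact_mod_cast congrArg (fun n : ℕ => (n:ℝ)) this
      linear_combination ((-1:ℝ)^l * MvPowerSeries.coeff β (q^s * zk (k+s))) * hch
    rw [Finset.sum_congr rfl hinner, ← Finset.sum_mul]
    congr 1
    have halt : (∑ l ∈ Finset.range (s+1), (-1:ℝ)^l * (s.choose l : ℝ))
        = if s = 0 then (1:ℝ) else 0 := by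
      have := Int.alternating_sum_range_choose (n := s)
      have hcast := congrArg (fun z : ℤ => (z:ℝ)) this
      push_cast at hcast
      rw [hcast]
    calc ∑ l ∈ Finset.range (s+1), (-1:ℝ)^l * (((k+s).choose k : ℝ) * (s.choose l : ℝ))
        = ((k+s).choose k : ℝ) * ∑ l ∈ Finset.range (s+1), (-1:ℝ)^l * (s.choose l : ℝ) := by
          rw [Finset.mul_sum]
          refine Finset.sum_congr rfl fun l _ => by ring
      _ = ((k+s).choose k : ℝ) * (if s = 0 then (1:ℝ) else 0) := by rw [halt]
      _ = if s = 0 then (1:ℝ) else 0 := by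
          split_ifs with hs
          · subst hs; simp
          · ring
  rw [Finset.sum_congr rfl step4]
  rw [Finset.sum_eq_single_of_mem 0 (Finset.mem_range.mpr (by omega))]
  · rw [if_pos rfl, one_mul, pow_zero, one_mul, Nat.add_zero]
  · intro s _ hs
    rw [if_neg hs, zero_mul]

end Binom
section Final
open Finset MvPowerSeries

/-- the inverse family -/
noncomputable def pintF (α : ℝ) (pin : ℕ × ℕ → FPS) (Γ : MIdx → MIdx → ℝ) : ℕ × ℕ → FPS :=
  fun n => if h : n = (0,0) then -applyG (Gt α Γ) (pin (0,0))
    else applyG (Gt α Γ) (zn ⟨n, h⟩) - zn ⟨n, h⟩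

variable {α : ℝ} {pin : ℕ × ℕ → FPS} {Γ : MIdx → MIdx → ℝ}

lemma applyG_X (Γ' : MIdx → MIdx → ℝ) (v : Var) (β : MIdx) :
    applyG Γ' (MvPowerSeries.X v) β = Γ' β (Finsupp.single v 1) := by
  classical
  rw [applyG, finsum_eq_single _ (Finsupp.single v 1)
    (fun δ hδ => by rw [MvPowerSeries.coeff_X, if_neg hδ, mul_zero])]
  rw [MvPowerSeries.coeff_X, if_pos rfl, mul_one]

lemma Γ_inj (hα0 : 0 < α) (hα1 : α < 1) (hpop : PopCond α pin)
    (hG : IsReExpansion pin Γ) {a b : FPS} (h : applyG Γ a = applyG Γ b) : a = b := by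
  rw [← applyG_Gt_Γ hα0 hα1 hpop hG a, h, applyG_Gt_Γ hα0 hα1 hpop hG b]

lemma hΓpint (hα0 : 0 < α) (hα1 : α < 1) (hpop : PopCond α pin)
    (hG : IsReExpansion pin Γ) (n : ℕ × ℕ) :
    applyG Γ (pintF α pin Γ n) = -(pin n) := by
  by_cases hn : n = (0,0)
  · subst hn
    rw [pintF, dif_pos rfl, applyG_neg hG.1, applyG_Γ_Gt hα0 hα1 hpop hG]
  · rw [pintF, dif_neg hn, applyG_sub hG.1, applyG_Γ_Gt hα0 hα1 hpop hG,
      hG.2.2.2.2 ⟨n, hn⟩]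
    have : (⟨n, hn⟩ : Pos2).val = n := rfl
    rw [this]
    ring

lemma Gt_one (hα0 : 0 < α) (hα1 : α < 1) (hpop : PopCond α pin)
    (hG : IsReExpansion pin Γ) : applyG (Gt α Γ) 1 = 1 := by
  conv_lhs => rw [← hG.2.2.1]
  rw [applyG_Gt_Γ hα0 hα1 hpop hG]

lemma Gt_mult (hα0 : 0 < α) (hα1 : α < 1) (hpop : PopCond α pin)
    (hG : IsReExpansion pin Γ) (π π' : FPS) :
    applyG (Gt α Γ) (π * π') = applyG (Gt α Γ) π * applyG (Gt α Γ) π' := by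
  conv_lhs => rw [← applyG_Γ_Gt hα0 hα1 hpop hG π, ← applyG_Γ_Gt hα0 hα1 hpop hG π']
  rw [← hG.2.1, applyG_Gt_Γ hα0 hα1 hpop hG]

lemma Gt_zn (hα0 : 0 < α) (hα1 : α < 1) (hpop : PopCond α pin)
    (hG : IsReExpansion pin Γ) (n : Pos2) :
    applyG (Gt α Γ) (zn n) = zn n + pintF α pin Γ n.val := by
  rw [pintF, dif_neg n.2]
  have : (⟨n.val, n.2⟩ : Pos2) = n := rfl
  rw [this]
  ring

lemma Gt_zk (hα0 : 0 < α) (hα1 : α < 1) (hpop : PopCond α pin)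
    (hG : IsReExpansion pin Γ) (k : ℕ) :
    applyG (Gt α Γ) (zk k) = gammaZk (pintF α pin Γ (0,0)) k := by
  have hx : applyG Γ (pintF α pin Γ (0,0)) = -(pin (0,0)) := hΓpint hα0 hα1 hpop hG (0,0)
  have hmain := applyG_gammaZk_inv hα0 hα1 hpop hG hx k
  apply Γ_inj hα0 hα1 hpop hG
  rw [applyG_Γ_Gt hα0 hα1 hpop hG, hmain]

lemma pop_pint (hα0 : 0 < α) (hα1 : α < 1) (hpop : PopCond α pin)
    (hG : IsReExpansion pin Γ) : PopCond α (pintF α pin Γ) := by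
  intro n β hcoeff
  by_cases hn : n = (0,0)
  · subst hn
    rw [hom_eq_dE]
    have := dE_nonneg hα0 hα1 β
    norm_num
    linarith
  · set mP : Pos2 := ⟨n, hn⟩ with hm
    set en : MIdx := Finsupp.single (Sum.inr mP) 1 with hen
    have hc1 : MvPowerSeries.coeff β (pintF α pin Γ n)
        = applyG (Gt α Γ) (zn mP) β - MvPowerSeries.coeff β (zn mP) := by
      rw [pintF, dif_neg hn, map_sub]
      rfl
    have hc2 : applyG (Gt α Γ) (zn mP) β = Gt α Γ β en := applyG_X _ _ _
    have hc3 : MvPowerSeries.coeff β (zn mP) = idM β en := by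
      classical
      rw [zn, MvPowerSeries.coeff_X]
      by_cases hβ : β = en
      · rw [if_pos hβ, idM, if_pos hβ]
      · rw [if_neg hβ, idM, if_neg hβ]
    rw [hc1, hc2, hc3] at hcoeff
    have hJ : 1 ≤ Jb α β := Jb_pos hα0 hα1 (dE_nonneg hα0 hα1 β)
    obtain ⟨m', hm'⟩ : ∃ m', Jb α β = m' + 1 := ⟨Jb α β - 1, by omega⟩
    have hsplit : Gt α Γ β en
        = (∑ i ∈ Finset.range m', (-1:ℝ)^(i+1) * Npow Γ (i+1) β en)
          + (-1:ℝ)^0 * Npow Γ 0 β en := by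
      rw [Gt, hm', Finset.sum_range_succ']
    have hid : (-1:ℝ)^0 * Npow Γ 0 β en = idM β en := by
      rw [pow_zero, one_mul]; rfl
    rw [hsplit, hid, add_sub_cancel_right] at hcoeff
    obtain ⟨i, _, hi⟩ := Finset.exists_ne_zero_of_sum_ne_zero hcoeff
    have hNp : Npow Γ (i+1) β en ≠ 0 := fun h0 => hi (by rw [h0, mul_zero])
    obtain ⟨f, hf0, hfj, hstep⟩ := Npow_chain (i+1) β en hNp
    have hlt : dE α en < dE α β := by
      have := chain_lt hα0 hα1 hpop hG hstep (i+1) le_rfl 0 (by omega)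
      rwa [hf0, hfj] at this
    rw [hen, dE_single_inr] at hlt
    rw [hom_eq_dE]
    have hv1 : (mP.val.1 : ℝ) = (n.1 : ℝ) := rfl
    have hv2 : (mP.val.2 : ℝ) = (n.2 : ℝ) := rfl
    rw [hv1, hv2] at hlt
    linarith

end Final
/-- Existence of inverses (second part of Lemma 7.2): there is a family `{π̃⁽ⁿ⁾}`
satisfying the population condition with `Γ*(π̃⁽ⁿ⁾) = −π⁽ⁿ⁾` for all `n`, whose
associated re-expansion map is a two-sided inverse of `Γ*`. -/
theorem stmt_15 (α : ℝ) (hα0 : 0 < α) (hα1 : α < 1)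
    (pin : ℕ × ℕ → FPS) (hpop : PopCond α pin)
    (Γ : MIdx → MIdx → ℝ) (hΓ : IsReExpansion pin Γ) :
    ∃ pint : ℕ × ℕ → FPS, PopCond α pint ∧
      (∀ n : ℕ × ℕ, applyG Γ (pint n) = -(pin n)) ∧
      ∃ Γt : MIdx → MIdx → ℝ, IsReExpansion pint Γt ∧
        (∀ π : FPS, applyG Γ (applyG Γt π) = π) ∧
        (∀ π : FPS, applyG Γt (applyG Γ π) = π) := by
  refine ⟨pintF α pin Γ, pop_pint hα0 hα1 hpop hΓ, hΓpint hα0 hα1 hpop hΓ,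
    Gt α Γ, ⟨rowFinite_Gt hΓ.1, Gt_mult hα0 hα1 hpop hΓ, Gt_one hα0 hα1 hpop hΓ,
      Gt_zk hα0 hα1 hpop hΓ, Gt_zn hα0 hα1 hpop hΓ⟩,
    applyG_Γ_Gt hα0 hα1 hpop hΓ, applyG_Gt_Γ hα0 hα1 hpop hΓ⟩
end
end
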